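/- arXiv:2310.17827 — 9 statements merged into one kernel-verified Lean document; each statement's English description precedes it below -/
import Mathlib

section
/- For all nonnegative integers s ≥ k and all nonnegative integers d, the sum over j from 0 to d of C(2j,j)·C(j,k)·C(2d-2j,d-j)·C(d-j,s-k) equals 4^(d-s)·C(2k,k)·C(2s-2k,s-k)·C(d,s). -/
open Finset

/-- `((j+1) - k) * C(j+1, k) = (j+1) * C(j, k)` -/
private lemma aux_choose_step (j k : ℕ) :
    (j + 1).choose k * ((j + 1) - k) = (j + 1) * j.choose k := by
  rw [← Nat.choose_succ_right_eq, ← Nat.add_one_mul_choose_eq]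

/-- The one-term recurrence for `a j = C(2j,j) * C(j,k)`. -/
private lemma aux_rec (k j : ℕ) :
    ((j + 1) - k) * ((2 * (j + 1)).choose (j + 1) * (j + 1).choose k)
      = 2 * (2 * j + 1) * ((2 * j).choose j * j.choose k) := by
  have h1 : (j + 1) * (2 * (j + 1)).choose (j + 1) = 2 * (2 * j + 1) * (2 * j).choose j := by
    simpa [Nat.centralBinom] using Nat.succ_mul_centralBinom_succ j
  have h2 := aux_choose_step j k
  apply Nat.eq_of_mul_eq_mul_left (Nat.succ_pos j)
  calc (j + 1) * (((j + 1) - k) * ((2 * (j + 1)).choose (j + 1) * (j + 1).choose k))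
      = ((j + 1).choose k * ((j + 1) - k)) * ((j + 1) * (2 * (j + 1)).choose (j + 1)) := by
        ring
    _ = ((j + 1) * j.choose k) * (2 * (2 * j + 1) * (2 * j).choose j) := by rw [h1, h2]
    _ = (j + 1) * (2 * (2 * j + 1) * ((2 * j).choose j * j.choose k)) := by ring

/-- The sum recurrence `(d - s) * L d = 4 * d * L (d-1)` for `d = e+1`, `s = k+m`. -/
private lemma aux_sum_step (k m e : ℕ) :
    ((e + 1) - (k + m)) *
      ∑ j ∈ range (e + 2),
        (2 * j).choose j * j.choose k * ((2 * (e + 1 - j)).choose (e + 1 - j)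
          * (e + 1 - j).choose m)
    = 4 * (e + 1) *
      ∑ j ∈ range (e + 1),
        (2 * j).choose j * j.choose k * ((2 * (e - j)).choose (e - j) * (e - j).choose m) := by
  rw [Finset.mul_sum]
  have hsplit : ∀ j ∈ range (e + 2),
      ((e + 1) - (k + m)) * ((2 * j).choose j * j.choose k *
        ((2 * (e + 1 - j)).choose (e + 1 - j) * (e + 1 - j).choose m))
      = (j - k) * ((2 * j).choose j * j.choose k *
          ((2 * (e + 1 - j)).choose (e + 1 - j) * (e + 1 - j).choose m))
        + ((e + 1 - j) - m) * ((2 * j).choose j * j.choose k *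
          ((2 * (e + 1 - j)).choose (e + 1 - j) * (e + 1 - j).choose m)) := by
    intro j hj
    simp only [mem_range] at hj
    by_cases hjk : k ≤ j
    · by_cases hjm : m ≤ e + 1 - j
      · rw [← Nat.add_mul]
        congr 1
        omega
      · have : (e + 1 - j).choose m = 0 := Nat.choose_eq_zero_of_lt (by omega)
        simp [this]
    · have : j.choose k = 0 := Nat.choose_eq_zero_of_lt (by omega)
      simp [this]
  rw [Finset.sum_congr rfl hsplit, Finset.sum_add_distrib]
  have hS1 : ∑ j ∈ range (e + 2),
      (j - k) * ((2 * j).choose j * j.choose k *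
        ((2 * (e + 1 - j)).choose (e + 1 - j) * (e + 1 - j).choose m))
      = ∑ j ∈ range (e + 1),
        (2 * (2 * j + 1)) * ((2 * j).choose j * j.choose k *
          ((2 * (e - j)).choose (e - j) * (e - j).choose m)) := by
    rw [Finset.sum_range_succ']
    simp only [Nat.zero_sub, zero_mul, add_zero]
    refine Finset.sum_congr rfl ?_
    intro j hj
    simp only [mem_range] at hj
    have he : e + 1 - (j + 1) = e - j := by omega
    rw [he]
    calc ((j + 1) - k) * ((2 * (j + 1)).choose (j + 1) * (j + 1).choose k *
          ((2 * (e - j)).choose (e - j) * (e - j).choose m))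
        = (((j + 1) - k) * ((2 * (j + 1)).choose (j + 1) * (j + 1).choose k)) *
          ((2 * (e - j)).choose (e - j) * (e - j).choose m) := by ring
      _ = (2 * (2 * j + 1) * ((2 * j).choose j * j.choose k)) *
          ((2 * (e - j)).choose (e - j) * (e - j).choose m) := by rw [aux_rec]
      _ = (2 * (2 * j + 1)) * ((2 * j).choose j * j.choose k *
          ((2 * (e - j)).choose (e - j) * (e - j).choose m)) := by ring
  have hS2 : ∑ j ∈ range (e + 2),
      ((e + 1 - j) - m) * ((2 * j).choose j * j.choose k *
        ((2 * (e + 1 - j)).choose (e + 1 - j) * (e + 1 - j).choose m))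
      = ∑ j ∈ range (e + 1),
        (2 * (2 * (e - j) + 1)) * ((2 * j).choose j * j.choose k *
          ((2 * (e - j)).choose (e - j) * (e - j).choose m)) := by
    rw [Finset.sum_range_succ]
    have hz : e + 1 - (e + 1) = 0 := by omega
    rw [hz]
    simp only [Nat.zero_sub, zero_mul, add_zero]
    refine Finset.sum_congr rfl ?_
    intro j hj
    simp only [mem_range] at hj
    have he : e + 1 - j = (e - j) + 1 := by omega
    rw [he]
    calc ((e - j + 1) - m) * ((2 * j).choose j * j.choose k *
          ((2 * (e - j + 1)).choose (e - j + 1) * (e - j + 1).choose m))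
        = ((2 * j).choose j * j.choose k) *
          (((e - j + 1) - m) * ((2 * (e - j + 1)).choose (e - j + 1) * (e - j + 1).choose m)) := by
          ring
      _ = ((2 * j).choose j * j.choose k) *
          (2 * (2 * (e - j) + 1) * ((2 * (e - j)).choose (e - j) * (e - j).choose m)) := by
          rw [aux_rec]
      _ = (2 * (2 * (e - j) + 1)) * ((2 * j).choose j * j.choose k *
          ((2 * (e - j)).choose (e - j) * (e - j).choose m)) := by ring
  rw [hS1, hS2, ← Finset.sum_add_distrib, Finset.mul_sum]
  refine Finset.sum_congr rfl ?_
  intro j hj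
  simp only [mem_range] at hj
  have : 2 * (2 * j + 1) + 2 * (2 * (e - j) + 1) = 4 * (e + 1) := by omega
  rw [← Nat.add_mul, this]

private lemma aux_main (k m : ℕ) : ∀ d : ℕ,
    ∑ j ∈ range (d + 1),
      (2 * j).choose j * j.choose k * ((2 * (d - j)).choose (d - j) * (d - j).choose m)
    = 4 ^ (d - (k + m)) * (2 * k).choose k * ((2 * m).choose m * d.choose (k + m)) := by
  intro d
  induction d with
  | zero =>
    rw [Finset.sum_range_one]
    rcases Nat.eq_zero_or_pos (k + m) with h | h
    · have hk : k = 0 := by omega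
      have hm : m = 0 := by omega
      subst hk; subst hm; norm_num
    · rcases Nat.eq_zero_or_pos k with hk | hk
      · subst hk
        have hm : 0 < m := by omega
        simp [Nat.choose_eq_zero_of_lt hm, Nat.choose_eq_zero_of_lt h]
      · simp [Nat.choose_eq_zero_of_lt hk, Nat.choose_eq_zero_of_lt h]
  | succ e ih =>
    rcases lt_trichotomy (e + 1) (k + m) with h | h | h
    · have hc : (e + 1).choose (k + m) = 0 := Nat.choose_eq_zero_of_lt h
      rw [hc, Nat.mul_zero, Nat.mul_zero]
      refine Finset.sum_eq_zero ?_
      intro j hj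
      simp only [mem_range] at hj
      by_cases hjk : k ≤ j
      · have : (e + 1 - j).choose m = 0 := Nat.choose_eq_zero_of_lt (by omega)
        simp [this]
      · have : j.choose k = 0 := Nat.choose_eq_zero_of_lt (by omega)
        simp [this]
    · -- e + 1 = k + m : only j = k contributes
      have hsum : ∑ j ∈ range (e + 2),
          (2 * j).choose j * j.choose k *
            ((2 * (e + 1 - j)).choose (e + 1 - j) * (e + 1 - j).choose m)
          = (2 * k).choose k * k.choose k *
            ((2 * (e + 1 - k)).choose (e + 1 - k) * (e + 1 - k).choose m) := by
        refine Finset.sum_eq_single k ?_ ?_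
        · intro j hj hjk
          simp only [mem_range] at hj
          rcases lt_or_gt_of_ne hjk with h1 | h1
          · have : j.choose k = 0 := Nat.choose_eq_zero_of_lt h1
            simp [this]
          · have : (e + 1 - j).choose m = 0 := Nat.choose_eq_zero_of_lt (by omega)
            simp [this]
        · intro hk
          exact absurd (mem_range.mpr (by omega)) hk
      rw [hsum]
      have h1 : e + 1 - k = m := by omega
      have h2 : e + 1 - (k + m) = 0 := by omega
      rw [h1, h2, ← h, Nat.choose_self, Nat.choose_self, Nat.choose_self]
      ring
    · -- e + 1 > k + m : use the recurrence
      have hpos : 0 < (e + 1) - (k + m) := by omega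
      apply Nat.eq_of_mul_eq_mul_left hpos
      rw [aux_sum_step k m e, ih]
      have hch : ((e + 1) - (k + m)) * (e + 1).choose (k + m) = (e + 1) * e.choose (k + m) := by
        rw [mul_comm]
        exact aux_choose_step e (k + m)
      have hpow : (4 : ℕ) ^ (e + 1 - (k + m)) = 4 * 4 ^ (e - (k + m)) := by
        have : e + 1 - (k + m) = (e - (k + m)) + 1 := by omega
        rw [this, pow_succ]
        ring
      calc 4 * (e + 1) * (4 ^ (e - (k + m)) * (2 * k).choose k *
            ((2 * m).choose m * e.choose (k + m)))
          = (4 * 4 ^ (e - (k + m))) * (2 * k).choose k * (2 * m).choose m *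
            ((e + 1) * e.choose (k + m)) := by ring
        _ = (4 ^ (e + 1 - (k + m))) * (2 * k).choose k * (2 * m).choose m *
            (((e + 1) - (k + m)) * (e + 1).choose (k + m)) := by rw [hpow, hch]
        _ = ((e + 1) - (k + m)) * (4 ^ (e + 1 - (k + m)) * (2 * k).choose k *
            ((2 * m).choose m * (e + 1).choose (k + m))) := by ring

theorem stmt_0 (s k d : ℕ) (hk : k ≤ s) :
    ∑ j ∈ Finset.range (d + 1),
      (2 * j).choose j * j.choose k * (2 * (d - j)).choose (d - j) * (d - j).choose (s - k)
    = 4 ^ (d - s) * (2 * k).choose k * (2 * (s - k)).choose (s - k) * d.choose s := by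
  obtain ⟨m, rfl⟩ : ∃ m, s = k + m := ⟨s - k, by omega⟩
  have hm : k + m - k = m := by omega
  rw [hm]
  have := aux_main k m d
  calc ∑ j ∈ Finset.range (d + 1),
        (2 * j).choose j * j.choose k * (2 * (d - j)).choose (d - j) * (d - j).choose m
      = ∑ j ∈ Finset.range (d + 1),
        (2 * j).choose j * j.choose k *
          ((2 * (d - j)).choose (d - j) * (d - j).choose m) := by
        refine Finset.sum_congr rfl fun j _ => by ring
    _ = 4 ^ (d - (k + m)) * (2 * k).choose k * ((2 * m).choose m * d.choose (k + m)) := this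
    _ = 4 ^ (d - (k + m)) * (2 * k).choose k * (2 * m).choose m * d.choose (k + m) := by ring
end

section
/- For every even nonnegative integer s, the alternating sum over k from 0 to s of (-1)^k·C(2k,k)·C(2s-2k,s-k) equals 2^s·C(s,s/2). -/
private def cc (k : ℕ) : ℤ := ((2 * k).choose k : ℤ)

private lemma cc_rec (k : ℕ) : ((k : ℤ) + 1) * cc (k + 1) = 2 * (2 * (k : ℤ) + 1) * cc k := by
  have h := Nat.succ_mul_centralBinom_succ k
  simp only [Nat.centralBinom] at h
  unfold cc
  have h' : (((k + 1) * (2 * (k + 1)).choose (k + 1) : ℕ) : ℤ)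
      = ((2 * (2 * k + 1) * (2 * k).choose k : ℕ) : ℤ) := by rw [h]
  push_cast at h'
  linarith

private def BB (n : ℕ) : ℤ := ∑ k ∈ Finset.range (n + 1), (-1) ^ k * cc k * cc (n - k)

private lemma cc_zero : cc 0 = 1 := rfl
private lemma cc_one : cc 1 = 2 := rfl

private lemma BB_rec (n : ℕ) : ((n : ℤ) + 2) * BB (n + 2) = 16 * ((n : ℤ) + 1) * BB n := by
  set G : ℕ → ℤ := fun k => (-1) ^ k * cc k *
      ((4 * (n : ℤ) + 6) * (if k ≤ n + 1 then cc (n + 1 - k) else 0)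
        - ((n : ℤ) + 2) * (if k ≤ n + 2 then cc (n + 2 - k) else 0)) with hG
  have key : ∀ k ∈ Finset.range (n + 3),
      ((n : ℤ) + 2) * ((-1) ^ k * cc k * cc (n + 2 - k))
        - 16 * ((n : ℤ) + 1) * (if k ≤ n then (-1) ^ k * cc k * cc (n - k) else 0)
      = G (k + 1) - G k := by
    intro k hk
    rw [Finset.mem_range] at hk
    rcases Nat.lt_or_ge k (n + 1) with hkn | hkn
    · -- interior case k ≤ n
      have hkn' : k ≤ n := by omega
      obtain ⟨j, rfl⟩ : ∃ j, n = k + j := ⟨n - k, by omega⟩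
      simp only [hG]
      rw [if_pos (by omega : k ≤ k + j), if_pos (by omega : k ≤ k + j + 1),
        if_pos (by omega : k ≤ k + j + 2), if_pos (by omega : k + 1 ≤ k + j + 1),
        if_pos (by omega : k + 1 ≤ k + j + 2)]
      have e0 : k + j - k = j := by omega
      have e1 : k + j + 1 - k = j + 1 := by omega
      have e2 : k + j + 2 - k = j + 2 := by omega
      have e3 : k + j + 1 - (k + 1) = j := by omega
      have e4 : k + j + 2 - (k + 1) = j + 1 := by omega
      rw [e0, e1, e2, e3, e4]
      have r1 := cc_rec k
      have r2 := cc_rec j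
      have r3 : ((k : ℤ) + 1) * ((j : ℤ) + 1) ≠ 0 := by positivity
      apply mul_left_cancel₀ r3
      push_cast
      linear_combination
        ((-1) ^ k * ((4 * ((k : ℤ) + (j : ℤ)) + 6) * ((j : ℤ) + 1) * cc j
          - (((k : ℤ) + (j : ℤ)) + 2) * ((j : ℤ) + 1) * cc (j + 1))) * r1
        + ((-1) ^ k * ((4 * ((k : ℤ) + (j : ℤ)) + 6) * ((k : ℤ) + 1)
          - 2 * (((k : ℤ) + (j : ℤ)) + 2) * (2 * (k : ℤ) + 1)) * cc k) * r2
    · rcases Nat.lt_or_ge k (n + 2) with hk2 | hk2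
      · -- k = n + 1
        have : k = n + 1 := by omega
        subst this
        simp only [hG]
        rw [if_neg (by omega : ¬ n + 1 ≤ n), if_pos (by omega : n + 1 ≤ n + 1),
          if_pos (by omega : n + 1 ≤ n + 2), if_neg (by omega : ¬ n + 1 + 1 ≤ n + 1),
          if_pos (by omega : n + 1 + 1 ≤ n + 2)]
        have e1 : n + 2 - (n + 1) = 1 := by omega
        have e2 : n + 1 - (n + 1) = 0 := by omega
        have e3 : n + 2 - (n + 1 + 1) = 0 := by omega
        rw [e1, e2, e3, cc_zero, cc_one]
        have r := cc_rec (n + 1)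
        push_cast at r ⊢
        linear_combination ((-1) ^ n) * r
      · -- k = n + 2
        have : k = n + 2 := by omega
        subst this
        simp only [hG]
        rw [if_neg (by omega : ¬ n + 2 ≤ n), if_neg (by omega : ¬ n + 2 ≤ n + 1),
          if_pos (by omega : n + 2 ≤ n + 2), if_neg (by omega : ¬ n + 2 + 1 ≤ n + 1),
          if_neg (by omega : ¬ n + 2 + 1 ≤ n + 2)]
        have e1 : n + 2 - (n + 2) = 0 := by omega
        rw [e1, cc_zero]
        ring
  have hsum := Finset.sum_congr rfl key
  rw [Finset.sum_sub_distrib, Finset.sum_range_sub G (n + 3)] at hsum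
  have hG0 : G 0 = 0 := by
    simp only [hG]
    rw [if_pos (by omega : 0 ≤ n + 1), if_pos (by omega : 0 ≤ n + 2)]
    simp only [Nat.sub_zero, pow_zero, cc_zero, one_mul]
    have r := cc_rec (n + 1)
    push_cast at r
    linear_combination -r
  have hGend : G (n + 3) = 0 := by
    simp only [hG]
    rw [if_neg (by omega : ¬ n + 3 ≤ n + 1), if_neg (by omega : ¬ n + 3 ≤ n + 2)]
    ring
  rw [hG0, hGend, sub_zero] at hsum
  have hA : ∑ k ∈ Finset.range (n + 3), ((n : ℤ) + 2) * ((-1) ^ k * cc k * cc (n + 2 - k))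
      = ((n : ℤ) + 2) * BB (n + 2) := by
    rw [BB, Finset.mul_sum]
  have hB : ∑ k ∈ Finset.range (n + 3),
      16 * ((n : ℤ) + 1) * (if k ≤ n then (-1) ^ k * cc k * cc (n - k) else 0)
      = 16 * ((n : ℤ) + 1) * BB n := by
    rw [BB, Finset.mul_sum]
    rw [show n + 3 = (n + 1) + 1 + 1 from rfl, Finset.sum_range_succ, Finset.sum_range_succ]
    rw [if_neg (by omega : ¬ n + 1 ≤ n), if_neg (by omega : ¬ n + 2 ≤ n)]
    simp only [mul_zero, add_zero]
    apply Finset.sum_congr rfl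
    intro k hk
    rw [Finset.mem_range] at hk
    rw [if_pos (by omega : k ≤ n)]
  rw [hA, hB] at hsum
  linarith

private lemma BB_even (m : ℕ) : BB (2 * m) = 4 ^ m * cc m := by
  induction m with
  | zero => simp [BB, cc_zero]
  | succ m ih =>
    have h := BB_rec (2 * m)
    rw [ih] at h
    have hm : (2 * (m : ℤ) + 2) ≠ 0 := by positivity
    have r := cc_rec m
    apply mul_left_cancel₀ hm
    have e : 2 * (m + 1) = 2 * m + 2 := by ring
    rw [e]
    push_cast at h ⊢
    linear_combination h - 8 * (4 : ℤ) ^ m * r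

theorem stmt_1 (s : ℕ) (hs : Even s) :
    ∑ k ∈ Finset.range (s + 1),
      (-1 : ℤ) ^ k * (2 * k).choose k * (2 * (s - k)).choose (s - k)
    = 2 ^ s * s.choose (s / 2) := by
  obtain ⟨m, rfl⟩ := hs
  rw [show m + m = 2 * m from (two_mul m).symm]
  have h1 : ∑ k ∈ Finset.range (2 * m + 1),
      (-1 : ℤ) ^ k * (2 * k).choose k * (2 * (2 * m - k)).choose (2 * m - k)
      = BB (2 * m) := rfl
  rw [h1, BB_even]
  have h2 : (2 * m) / 2 = m := by omega
  rw [h2, cc]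
  have : (2 : ℤ) ^ (2 * m) = 4 ^ m := by rw [pow_mul]; norm_num
  rw [this]
end

section
/- Let d be a positive integer and define δ(t) = Σ_{j=0}^{d} C(d,j)²·C(2d,2j)^{-1}·t^j·(1-t)^{d-j} for t ∈ [0,1]. Then the minimum of δ(t) over t ∈ [0,1] equals 2^d / C(2d,d), and it is attained at t = 1/2. -/
open Finset

noncomputable def ee (n : ℕ) : ℝ := n.centralBinom

lemma hE (n : ℕ) : ((n:ℝ)+1) * ee (n+1) = (4*n+2) * ee n := by
  have h := Nat.succ_mul_centralBinom_succ n
  have h2 : (((n+1) * Nat.centralBinom (n+1) : ℕ) : ℝ) = ((2 * (2*n+1) * Nat.centralBinom n : ℕ) : ℝ) :=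
    congrArg Nat.cast h
  push_cast at h2
  unfold ee; linarith

lemma ee_pos (n : ℕ) : 0 < ee n := by
  unfold ee; exact_mod_cast Nat.centralBinom_pos n

lemma ee_zero : ee 0 = 1 := by unfold ee; norm_num [Nat.centralBinom]

noncomputable def cL (d j : ℕ) : ℝ := if j ≤ d then ee j * ee (d-j) else 0

lemma coefL (d j : ℕ) :
    ((d:ℝ)+2) * cL (d+2) j
      = (4*d+6) * (cL (d+1) j + (if j = 0 then 0 else cL (d+1) (j-1)))
        - 16*((d:ℝ)+1) * (if j = 0 then 0 else cL d (j-1)) := by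
  match j with
  | 0 =>
    simp only [if_pos rfl, cL, Nat.zero_le, if_true, Nat.sub_zero, ee_zero, one_mul]
    have h := hE (d+1); push_cast at h; linarith
  | (i+1) =>
    simp only [Nat.add_sub_cancel, if_neg (Nat.succ_ne_zero i)]
    rcases lt_or_ge (d+1) i with hi | hi
    · -- i > d+1 : everything zero
      rw [cL, if_neg (by omega), cL, if_neg (by omega), cL, if_neg (by omega),
        cL, if_neg (by omega)]
      ring
    · rcases eq_or_lt_of_le hi with hi' | hi'
      · -- i = d+1
        subst hi'
        rw [cL, if_pos (by omega), cL, if_neg (by omega), cL, if_pos (by omega),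
          cL, if_neg (by omega)]
        have e1 : d + 2 - (d+1+1) = 0 := by omega
        have e2 : d + 1 - (d+1) = 0 := by omega
        rw [e1, e2, ee_zero]
        have h := hE (d+1); push_cast at h; linarith
      · -- i ≤ d
        have hid : i ≤ d := by omega
        obtain ⟨m, rfl⟩ := Nat.exists_eq_add_of_le hid
        rw [cL, if_pos (by omega), cL, if_pos (by omega), cL, if_pos (by omega),
          cL, if_pos (by omega)]
        have e1 : i + m + 2 - (i+1) = m+1 := by omega
        have e2 : i + m + 1 - (i+1) = m := by omega
        have e3 : i + m + 1 - i = m+1 := by omega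
        have e4 : i + m - i = m := by omega
        rw [e1, e2, e3, e4]
        have hXi : ee (i+1) = (4*(i:ℝ)+2) * ee i / ((i:ℝ)+1) := by
          rw [eq_div_iff (by positivity)]; linarith [hE i]
        have hXm : ee (m+1) = (4*(m:ℝ)+2) * ee m / ((m:ℝ)+1) := by
          rw [eq_div_iff (by positivity)]; linarith [hE m]
        rw [hXi, hXm]
        push_cast
        field_simp
        ring

noncomputable def LL (d : ℕ) (t : ℝ) : ℝ := ∑ j ∈ range (d+1), cL d j * t^j * (1-t)^(d-j)

lemma cL_oob {d j : ℕ} (h : d < j) : cL d j = 0 := if_neg (by omega)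

lemma shiftsum (d : ℕ) (t : ℝ) (g : ℕ → ℝ) :
    (∑ j ∈ range (d+3), (if j = 0 then 0 else g (j-1)) * t^j * (1-t)^(d+2-j))
      = ∑ j ∈ range (d+2), g j * t^(j+1) * (1-t)^(d+1-j) := by
  rw [sum_range_succ' (fun j => (if j = 0 then 0 else g (j-1)) * t^j * (1-t)^(d+2-j)) (d+2)]
  simp only [Nat.succ_ne_zero, if_false, Nat.add_sub_cancel, eq_self_iff_true, if_true, zero_mul, add_zero]
  refine sum_congr rfl fun x hx => ?_
  have h : d + 2 - (x+1) = d + 1 - x := by omega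
  rw [h]

lemma recL (d : ℕ) (t : ℝ) :
    ((d:ℝ)+2) * LL (d+2) t
      = (4*d+6) * LL (d+1) t - 16*t*(1-t)*((d:ℝ)+1) * LL d t := by
  -- express LL (d+1) t in the degree d+2 Bernstein basis
  have hS : LL (d+1) t
      = (∑ j ∈ range (d+3), cL (d+1) j * t^j * (1-t)^(d+2-j))
        + ∑ j ∈ range (d+3),
            (if j = 0 then 0 else cL (d+1) (j-1)) * t^j * (1-t)^(d+2-j) := by
    have step : LL (d+1) t
        = ∑ j ∈ range (d+2),
            (cL (d+1) j * t^j * (1-t)^(d+2-j) + cL (d+1) j * t^(j+1) * (1-t)^(d+1-j)) := by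
      unfold LL
      refine sum_congr rfl fun j hj => ?_
      have hj' : j ≤ d + 1 := by simpa [Nat.lt_succ_iff] using hj
      have : d + 2 - j = (d + 1 - j) + 1 := by omega
      rw [this, pow_succ]
      ring
    rw [step, sum_add_distrib]
    congr 1
    · rw [sum_range_succ _ (d+2), cL_oob (by omega)]
      simp
    · rw [shiftsum]
  have hT : t * (1-t) * LL d t
      = ∑ j ∈ range (d+3), (if j = 0 then 0 else cL d (j-1)) * t^j * (1-t)^(d+2-j) := by
    rw [shiftsum, sum_range_succ _ (d+1), cL_oob (show d < d+1 by omega)]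
    simp only [zero_mul, add_zero]
    unfold LL
    rw [mul_sum]
    refine sum_congr rfl fun j hj => ?_
    have hj' : j ≤ d := by simpa [Nat.lt_succ_iff] using hj
    have h1 : d + 1 - j = (d - j) + 1 := by omega
    rw [h1, pow_succ]
    ring
  have hC : LL (d+2) t = ∑ j ∈ range (d+3), cL (d+2) j * t^j * (1-t)^(d+2-j) := rfl
  rw [hC, hS,
    show 16*t*(1-t)*((d:ℝ)+1) * LL d t = 16*((d:ℝ)+1) * (t*(1-t)*LL d t) from by ring, hT,
    mul_add, mul_sum, mul_sum, mul_sum, mul_sum, ← sum_add_distrib, ← sum_sub_distrib]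
  refine sum_congr rfl fun j hj => ?_
  linear_combination (t^j*(1-t)^(d+2-j)) * coefL d j

noncomputable def rR (d k : ℕ) : ℝ := 2^d * ee k * (d.choose (2*k))
noncomputable def RR (d : ℕ) (t : ℝ) : ℝ := ∑ k ∈ range (d+1), rR d k * (t-1/2)^(2*k)

-- the key (★) identity
lemma starId (d i : ℕ) :
    4*((d:ℝ)+2) * ee (i+1) * ((d+2).choose (2*i+2)) =
      (8*d+12) * ee (i+1) * ((d+1).choose (2*i+2))
      - 4*((d:ℝ)+1) * ee (i+1) * (d.choose (2*i+2))
      + 16*((d:ℝ)+1) * ee i * (d.choose (2*i)) := by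
  rcases lt_or_ge d (2*i) with h | h
  · rw [Nat.choose_eq_zero_of_lt (by omega), Nat.choose_eq_zero_of_lt (by omega),
      Nat.choose_eq_zero_of_lt (by omega), Nat.choose_eq_zero_of_lt (by omega)]
    push_cast; ring
  rcases eq_or_lt_of_le h with h0 | h
  · -- d = 2i
    rw [← h0,
      show ((2*i+2).choose (2*i+2)) = 1 from Nat.choose_self _,
      show ((2*i+1).choose (2*i+2)) = 0 from Nat.choose_eq_zero_of_lt (by omega),
      show ((2*i).choose (2*i+2)) = 0 from Nat.choose_eq_zero_of_lt (by omega),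
      show ((2*i).choose (2*i)) = 1 from Nat.choose_self _]
    push_cast
    linear_combination 8 * hE i
  rcases eq_or_lt_of_le (show 2*i+1 ≤ d from h) with h1 | h1
  · -- d = 2i+1
    rw [← h1,
      show ((2*i+1+2).choose (2*i+2)) = 2*i+3 from by
        rw [show 2*i+1+2 = (2*i+2)+1 from by omega, Nat.choose_succ_self_right],
      show ((2*i+1+1).choose (2*i+2)) = 1 from by
        rw [show 2*i+1+1 = 2*i+2 from by omega, Nat.choose_self],
      show ((2*i+1).choose (2*i+2)) = 0 from Nat.choose_eq_zero_of_lt (by omega),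
      show ((2*i+1).choose (2*i)) = 2*i+1 from by
        rw [show 2*i+1 = (2*i)+1 from rfl, Nat.choose_succ_self_right]]
    push_cast
    linear_combination (16*(i:ℝ)+16) * hE i
  · -- d ≥ 2i+2
    have h2 : 2*i+2 ≤ d := by omega
    -- ratio identities
    have r1 : ((d.choose (2*i+1) : ℕ) : ℝ) * (2*i+1) = (d.choose (2*i)) * ((d:ℝ) - 2*i) := by
      have := Nat.choose_succ_right_eq d (2*i)
      have hcast : ((d.choose (2*i+1) * (2*i+1) : ℕ) : ℝ) = ((d.choose (2*i) * (d - 2*i) : ℕ) : ℝ) :=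
        congrArg Nat.cast this
      push_cast [Nat.cast_sub (by omega : 2*i ≤ d)] at hcast
      linarith
    have r2 : ((d.choose (2*i+2) : ℕ) : ℝ) * (2*i+2) = (d.choose (2*i+1)) * ((d:ℝ) - (2*i+1)) := by
      have := Nat.choose_succ_right_eq d (2*i+1)
      have hcast : ((d.choose (2*i+2) * (2*i+2) : ℕ) : ℝ) = ((d.choose (2*i+1) * (d - (2*i+1)) : ℕ) : ℝ) :=
        congrArg Nat.cast this
      push_cast [Nat.cast_sub (by omega : 2*i+1 ≤ d)] at hcast
      linarith
    have p1 : (((d+1).choose (2*i+2) : ℕ) : ℝ) = (d.choose (2*i+1)) + (d.choose (2*i+2)) := by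
      rw [Nat.choose_succ_succ' (d) (2*i+1)]
      push_cast; ring
    have p2 : (((d+2).choose (2*i+2) : ℕ) : ℝ)
        = (d.choose (2*i)) + 2*(d.choose (2*i+1)) + (d.choose (2*i+2)) := by
      rw [show d+2 = (d+1)+1 from rfl, Nat.choose_succ_succ' (d+1) (2*i+1),
        Nat.choose_succ_succ' d (2*i), Nat.choose_succ_succ' d (2*i+1)]
      push_cast; ring
    have hX : ee (i+1) = (4*(i:ℝ)+2) * ee i / ((i:ℝ)+1) := by
      rw [eq_div_iff (by positivity)]; linarith [hE i]
    have hY : ((d.choose (2*i+1) : ℕ) : ℝ) = (d.choose (2*i)) * ((d:ℝ) - 2*i) / (2*i+1) := by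
      rw [eq_div_iff (by positivity)]; linarith [r1]
    have hZ : ((d.choose (2*i+2) : ℕ) : ℝ) = (d.choose (2*i+1)) * ((d:ℝ) - (2*i+1)) / (2*i+2) := by
      rw [eq_div_iff (by positivity)]; linarith [r2]
    rw [p2, p1, hZ, hY, hX]
    field_simp
    ring

lemma coefR (d k : ℕ) :
    ((d:ℝ)+2) * rR (d+2) k
      = (4*d+6) * rR (d+1) k - 4*((d:ℝ)+1) * rR d k
        + 16*((d:ℝ)+1) * (if k = 0 then 0 else rR d (k-1)) := by
  match k with
  | 0 =>
    simp [rR, ee_zero]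
    ring
  | (i+1) =>
    simp only [if_neg (Nat.succ_ne_zero i), Nat.add_sub_cancel, rR]
    rw [show 2*(i+1) = 2*i+2 from by omega]
    linear_combination ((2:ℝ)^d) * starId d i

lemma rR_oob {d k : ℕ} (h : d < 2*k) : rR d k = 0 := by
  unfold rR; rw [Nat.choose_eq_zero_of_lt h]; simp

lemma recR (d : ℕ) (t : ℝ) :
    ((d:ℝ)+2) * RR (d+2) t
      = (4*d+6) * RR (d+1) t - 16*t*(1-t)*((d:ℝ)+1) * RR d t := by
  have hB : RR (d+1) t = ∑ k ∈ range (d+3), rR (d+1) k * (t-1/2)^(2*k) := by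
    unfold RR
    rw [sum_range_succ _ (d+2), rR_oob (show d+1 < 2*(d+2) by omega)]
    simp
  have hD : RR d t = ∑ k ∈ range (d+3), rR d k * (t-1/2)^(2*k) := by
    unfold RR
    rw [sum_range_succ _ (d+2), rR_oob (show d < 2*(d+2) by omega),
      sum_range_succ _ (d+1), rR_oob (show d < 2*(d+1) by omega)]
    simp
  have hS2 : (t-1/2)^2 * RR d t
      = ∑ k ∈ range (d+3), (if k = 0 then 0 else rR d (k-1)) * (t-1/2)^(2*k) := by
    rw [sum_range_succ' (fun k => (if k = 0 then 0 else rR d (k-1)) * (t-1/2)^(2*k)) (d+2)]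
    simp only [Nat.succ_ne_zero, if_false, Nat.add_sub_cancel, eq_self_iff_true, if_true,
      zero_mul, add_zero]
    rw [sum_range_succ _ (d+1), rR_oob (show d < 2*(d+1) by omega)]
    simp only [zero_mul, add_zero]
    unfold RR
    rw [mul_sum]
    refine sum_congr rfl fun k hk => ?_
    rw [show 2*(k+1) = 2*k + 2 from by omega, pow_add]
    ring
  have hA : RR (d+2) t = ∑ k ∈ range (d+3), rR (d+2) k * (t-1/2)^(2*k) := rfl
  have key : 16*t*(1-t)*((d:ℝ)+1) * RR d t
      = 4*((d:ℝ)+1) * RR d t - 16*((d:ℝ)+1) * ((t-1/2)^2 * RR d t) := by ring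
  rw [hA, key, hS2, hB, hD, mul_sum, mul_sum, mul_sum, mul_sum, ← sum_sub_distrib,
    ← sum_sub_distrib]
  refine sum_congr rfl fun k hk => ?_
  linear_combination ((t-1/2)^(2*k)) * coefR d k

lemma ee_one : ee 1 = 2 := by
  unfold ee
  rw [show (1:ℕ).centralBinom = 2 from by decide]
  norm_num

lemma LeqR : ∀ (d : ℕ) (t : ℝ), LL d t = RR d t
  | 0, t => by
      unfold LL RR cL rR
      norm_num [ee_zero]
  | 1, t => by
      unfold LL RR cL rR
      rw [Finset.sum_range_succ, Finset.sum_range_succ, Finset.sum_range_succ,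
        Finset.sum_range_succ]
      norm_num [ee_zero, ee_one]
      ring
  | (d+2), t => by
      have h1 := LeqR d t
      have h2 := LeqR (d+1) t
      have hL := recL d t
      have hR := recR d t
      have hd2 : ((d:ℝ)+2) ≠ 0 := by positivity
      apply mul_left_cancel₀ hd2
      rw [hL, hR, h1, h2]

lemma fact_ne (n : ℕ) : ((Nat.factorial n : ℕ) : ℝ) ≠ 0 := by
  exact_mod_cast Nat.factorial_ne_zero n

lemma coef_key (d j : ℕ) (hj : j ≤ d) :
    ((d.choose j : ℕ) : ℝ)^2 * (((2*d).choose (2*j) : ℕ) : ℝ)⁻¹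
      = cL d j * (((2*d).choose d : ℕ) : ℝ)⁻¹ := by
  obtain ⟨m, rfl⟩ := Nat.exists_eq_add_of_le hj
  rw [cL, if_pos (by omega), show j + m - j = m from by omega]
  have c1 : (((j+m).choose j : ℕ) : ℝ) = (Nat.factorial (j+m) : ℕ) / ((Nat.factorial j : ℕ) * ((Nat.factorial m : ℕ))) := by
    rw [Nat.cast_choose ℝ (by omega : j ≤ j + m), show j + m - j = m from by omega]
  have c2 : (((2*(j+m)).choose (2*j) : ℕ) : ℝ)
      = (Nat.factorial (2*(j+m)) : ℕ) / ((Nat.factorial (2*j) : ℕ) * ((Nat.factorial (2*m) : ℕ))) := by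
    rw [Nat.cast_choose ℝ (by omega : 2*j ≤ 2*(j+m)), show 2*(j+m) - 2*j = 2*m from by omega]
  have c3 : (((2*(j+m)).choose (j+m) : ℕ) : ℝ)
      = (Nat.factorial (2*(j+m)) : ℕ) / ((Nat.factorial (j+m) : ℕ) * ((Nat.factorial (j+m) : ℕ))) := by
    rw [Nat.cast_choose ℝ (by omega : j+m ≤ 2*(j+m)), show 2*(j+m) - (j+m) = j+m from by omega]
  have c4 : ee j = (Nat.factorial (2*j) : ℕ) / ((Nat.factorial j : ℕ) * ((Nat.factorial j : ℕ))) := by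
    unfold ee Nat.centralBinom
    rw [Nat.cast_choose ℝ (by omega : j ≤ 2*j), show 2*j - j = j from by omega]
  have c5 : ee m = (Nat.factorial (2*m) : ℕ) / ((Nat.factorial m : ℕ) * ((Nat.factorial m : ℕ))) := by
    unfold ee Nat.centralBinom
    rw [Nat.cast_choose ℝ (by omega : m ≤ 2*m), show 2*m - m = m from by omega]
  rw [c1, c2, c3, c4, c5]
  have h1 := fact_ne j
  have h2 := fact_ne m
  have h3 := fact_ne (j+m)
  have h4 := fact_ne (2*j)
  have h5 := fact_ne (2*m)
  have h6 := fact_ne (2*(j+m))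
  field_simp

lemma delta_eq (d : ℕ) (t : ℝ) :
    (∑ j ∈ range (d+1),
        (d.choose j : ℝ)^2 * ((2*d).choose (2*j) : ℝ)⁻¹ * t^j * (1-t)^(d-j))
      = LL d t / (((2*d).choose d : ℕ) : ℝ) := by
  unfold LL
  rw [sum_div]
  refine sum_congr rfl fun j hj => ?_
  have hj' : j ≤ d := by simpa [Nat.lt_succ_iff] using hj
  rw [div_eq_mul_inv]
  rw [show cL d j * t^j * (1-t)^(d-j) * (((2*d).choose d : ℕ) : ℝ)⁻¹
      = (cL d j * (((2*d).choose d : ℕ) : ℝ)⁻¹) * t^j * (1-t)^(d-j) from by ring,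
    ← coef_key d j hj']

lemma RR_ge (d : ℕ) (t : ℝ) : (2:ℝ)^d ≤ RR d t := by
  unfold RR
  rw [sum_range_succ' (fun k => rR d k * (t-1/2)^(2*k)) d]
  have h0 : rR d 0 * (t-1/2)^(2*0) = 2^d := by simp [rR, ee_zero]
  rw [h0]
  have hnn : 0 ≤ ∑ k ∈ range d, rR d (k+1) * (t-1/2)^(2*(k+1)) := by
    refine sum_nonneg fun k _ => mul_nonneg ?_ ?_
    · unfold rR
      have := (ee_pos (k+1)).le
      positivity
    · rw [pow_mul]
      positivity
  linarith

lemma RR_half (d : ℕ) : RR d (1/2 : ℝ) = 2^d := by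
  unfold RR
  rw [sum_range_succ' (fun k => rR d k * ((1:ℝ)/2-1/2)^(2*k)) d]
  have h0 : rR d 0 * ((1:ℝ)/2-1/2)^(2*0) = 2^d := by simp [rR, ee_zero]
  rw [h0]
  have : ∀ k ∈ range d, rR d (k+1) * ((1:ℝ)/2-1/2)^(2*(k+1)) = 0 := by
    intro k _
    rw [show (1:ℝ)/2 - 1/2 = 0 from by norm_num, zero_pow (by omega)]
    ring
  rw [Finset.sum_congr rfl this]
  simp

theorem stmt_4 (d : ℕ) (hd : 0 < d) :
    IsLeast
      ((fun t : ℝ => ∑ j ∈ Finset.range (d + 1),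
          (d.choose j : ℝ) ^ 2 * ((2 * d).choose (2 * j) : ℝ)⁻¹ * t ^ j * (1 - t) ^ (d - j)) ''
        Set.Icc (0 : ℝ) 1)
      (2 ^ d / ((2 * d).choose d : ℝ)) ∧
    ∑ j ∈ Finset.range (d + 1),
        (d.choose j : ℝ) ^ 2 * ((2 * d).choose (2 * j) : ℝ)⁻¹ * (1 / 2 : ℝ) ^ j *
          (1 - 1 / 2 : ℝ) ^ (d - j)
      = 2 ^ d / ((2 * d).choose d : ℝ) := by
  have hCpos : (0:ℝ) < ((2*d).choose d : ℝ) := by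
    exact_mod_cast Nat.choose_pos (by omega : d ≤ 2*d)
  have hval : ∀ t : ℝ,
      (∑ j ∈ Finset.range (d + 1),
        (d.choose j : ℝ) ^ 2 * ((2 * d).choose (2 * j) : ℝ)⁻¹ * t ^ j * (1 - t) ^ (d - j))
        = RR d t / ((2*d).choose d : ℝ) := by
    intro t
    rw [delta_eq, LeqR]
  have hhalf : (∑ j ∈ Finset.range (d + 1),
        (d.choose j : ℝ) ^ 2 * ((2 * d).choose (2 * j) : ℝ)⁻¹ * (1/2:ℝ) ^ j * (1 - 1/2 : ℝ) ^ (d - j))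
        = 2 ^ d / ((2 * d).choose d : ℝ) := by
    rw [hval (1/2), RR_half]
  refine ⟨⟨⟨1/2, by norm_num, hhalf⟩, ?_⟩, hhalf⟩
  rintro x ⟨t, ht, rfl⟩
  dsimp only
  rw [hval t]
  exact (div_le_div_iff_of_pos_right hCpos).mpr (RR_ge d t)
end

section
/- Let d be a positive integer and δ(t) = Σ_{j=0}^{d} C(d,j)²·C(2d,2j)^{-1}·t^j·(1-t)^{d-j}. After the substitution t = 1/2 + x, δ is a polynomial in x in which the coefficient of x^s is 0 when s is odd, and equals 2^d·C(d,s)·C(s,s/2)/C(2d,d) when s is even. -/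
open Polynomial Finset

noncomputable def pA : ℝ[X] := Polynomial.C (1/2 : ℝ) + Polynomial.X
noncomputable def pB : ℝ[X] := Polynomial.C (1/2 : ℝ) - Polynomial.X

noncomputable def PP (d : ℕ) : ℝ[X] :=
  ∑ j ∈ Finset.range (d+1),
    ((Nat.centralBinom j : ℝ) * (Nat.centralBinom (d - j) : ℝ)) • (pA ^ j * pB ^ (d - j))

noncomputable def QQ (d : ℕ) : ℝ[X] :=
  ∑ m ∈ Finset.range (d+1),
    ((2:ℝ)^d * (Nat.centralBinom m : ℝ) * (d.choose (2*m) : ℝ)) • Polynomial.X ^ (2*m)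

lemma hABone : pA + pB = 1 := by
  rw [pA, pB]
  have : (Polynomial.C (1/2 : ℝ)) + Polynomial.C (1/2:ℝ) = 1 := by
    rw [← Polynomial.C_add]; norm_num
  linear_combination this

lemma hABmul : pA * pB = Polynomial.C (1/4 : ℝ) - Polynomial.X^2 := by
  rw [pA, pB]
  have : (Polynomial.C (1/2 : ℝ)) * Polynomial.C (1/2:ℝ) = Polynomial.C (1/4:ℝ) := by
    rw [← Polynomial.C_mul]; norm_num
  linear_combination this

lemma hsplit (j k : ℕ) : pA^(j+1) * pB^k + pA^j * pB^(k+1) = pA^j * pB^k := by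
  have h : pA + pB = 1 := hABone
  calc pA^(j+1)*pB^k + pA^j*pB^(k+1) = (pA+pB) * (pA^j*pB^k) := by ring
  _ = pA^j*pB^k := by rw [h, one_mul]

lemma hcb (n : ℕ) : ((n:ℝ)+1) * (Nat.centralBinom (n+1) : ℝ)
    = (4*(n:ℝ)+2) * (Nat.centralBinom n : ℝ) := by
  have h := congrArg (fun x : ℕ => (x:ℝ)) (Nat.succ_mul_centralBinom_succ n)
  push_cast at h
  linarith

lemma hchooseR (n k : ℕ) : ((k:ℝ)+1) * (n.choose (k+1) : ℝ)
    = ((n:ℝ) - (k:ℝ)) * (n.choose k : ℝ) := by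
  rcases le_or_gt k n with h | h
  · have h2 := congrArg (fun x : ℕ => (x:ℝ)) (Nat.choose_succ_right_eq n k)
    push_cast [Nat.cast_sub h] at h2
    linarith
  · rw [Nat.choose_eq_zero_of_lt h, Nat.choose_eq_zero_of_lt (by omega)]
    simp

lemma midP (pR qR βp βp1 βq βq1 : ℝ) (hp : (pR+1)*βp1 = (4*pR+2)*βp)
    (hq : (qR+1)*βq1 = (4*qR+2)*βq) (hp0 : pR+1 ≠ 0) (hq0 : qR+1 ≠ 0) :
    (pR+qR+2) * (βp1*βq1)
      = (4*(pR+qR)+6) * (βp*βq1 + βp1*βq) - 16*(pR+qR+1) * (βp*βq) := by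
  have e1 : βp1 = (4*pR+2)*βp / (pR+1) := by
    field_simp; linarith
  have e2 : βq1 = (4*qR+2)*βq / (qR+1) := by
    field_simp; linarith
  rw [e1, e2]
  field_simp
  ring

lemma midQ (dR μR a b c β β' : ℝ) (h1 : (μR+1)*β = (4*μR+2)*β')
    (h2 : (2*μR+1)*b = (dR-2*μR)*c) (hμ : μR+1 ≠ 0) :
    4*(dR+2)*β*(a+2*b+c) = 2*(4*dR+6)*β*(a+b) - 4*(dR+1)*β*a + 16*(dR+1)*β'*c := by
  apply mul_left_cancel₀ hμ
  linear_combination (4*b+4*(dR+2)*c) * h1 + (8*β') * h2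
lemma recP (d : ℕ) :
    ((d:ℝ)+2) • PP (d+2) =
      (4*(d:ℝ)+6) • PP (d+1) - (16*((d:ℝ)+1)) • (pA * pB * PP d) := by
  have e1 : ((d:ℝ)+2) • PP (d+2)
      = ∑ a ∈ range (d+3),
          (((d:ℝ)+2) * ((Nat.centralBinom a : ℝ) * (Nat.centralBinom (d+2-a) : ℝ)))
            • (pA^a * pB^(d+2-a)) := by
    rw [PP, Finset.smul_sum]
    exact Finset.sum_congr rfl (fun j _ => smul_smul _ _ _)
  have h2a : (∑ a ∈ range (d+3),
        (if a = 0 then (0:ℝ) else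
          (4*(d:ℝ)+6) * ((Nat.centralBinom (a-1) : ℝ) * (Nat.centralBinom (d+2-a) : ℝ)))
          • (pA^a * pB^(d+2-a)))
      = ∑ j ∈ range (d+2),
          ((4*(d:ℝ)+6) * ((Nat.centralBinom j : ℝ) * (Nat.centralBinom (d+1-j) : ℝ)))
            • (pA^(j+1) * pB^(d+1-j)) := by
    rw [Finset.sum_range_succ']
    have hs : ∀ i : ℕ, d+2-(i+1) = d+1-i := fun i => by omega
    simp [hs]
  have h2b : (∑ a ∈ range (d+3),
        (if a = d+2 then (0:ℝ) else
          (4*(d:ℝ)+6) * ((Nat.centralBinom a : ℝ) * (Nat.centralBinom (d+1-a) : ℝ)))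
          • (pA^a * pB^(d+2-a)))
      = ∑ j ∈ range (d+2),
          ((4*(d:ℝ)+6) * ((Nat.centralBinom j : ℝ) * (Nat.centralBinom (d+1-j) : ℝ)))
            • (pA^j * pB^(d+2-j)) := by
    rw [Finset.sum_range_succ]
    simp only [eq_self_iff_true, if_true, zero_smul, add_zero]
    refine Finset.sum_congr rfl (fun j hj => ?_)
    rw [if_neg (by have := Finset.mem_range.mp hj; omega)]
  have e2 : (4*(d:ℝ)+6) • PP (d+1)
      = (∑ a ∈ range (d+3),
        (if a = 0 then (0:ℝ) else
          (4*(d:ℝ)+6) * ((Nat.centralBinom (a-1) : ℝ) * (Nat.centralBinom (d+2-a) : ℝ)))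
          • (pA^a * pB^(d+2-a)))
      + (∑ a ∈ range (d+3),
        (if a = d+2 then (0:ℝ) else
          (4*(d:ℝ)+6) * ((Nat.centralBinom a : ℝ) * (Nat.centralBinom (d+1-a) : ℝ)))
          • (pA^a * pB^(d+2-a))) := by
    rw [h2a, h2b, ← Finset.sum_add_distrib, PP, Finset.smul_sum]
    refine Finset.sum_congr rfl (fun j hj => ?_)
    have hj' : j ≤ d+1 := by have := Finset.mem_range.mp hj; omega
    have hk : d+2-j = (d+1-j)+1 := by omega
    rw [smul_smul, hk, ← smul_add, hsplit j (d+1-j)]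
  have e3 : (16*((d:ℝ)+1)) • (pA * pB * PP d)
      = ∑ a ∈ range (d+3),
          (if a = 0 then (0:ℝ) else if a = d+2 then (0:ℝ) else
            (16*((d:ℝ)+1)) * ((Nat.centralBinom (a-1) : ℝ) * (Nat.centralBinom (d+1-a) : ℝ)))
            • (pA^a * pB^(d+2-a)) := by
    have step1 : (∑ a ∈ range (d+3),
          (if a = 0 then (0:ℝ) else if a = d+2 then (0:ℝ) else
            (16*((d:ℝ)+1)) * ((Nat.centralBinom (a-1) : ℝ) * (Nat.centralBinom (d+1-a) : ℝ)))
            • (pA^a * pB^(d+2-a)))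
        = ∑ j ∈ range (d+1),
            ((16*((d:ℝ)+1)) * ((Nat.centralBinom j : ℝ) * (Nat.centralBinom (d-j) : ℝ)))
              • (pA^(j+1) * pB^(d+1-j)) := by
      rw [Finset.sum_range_succ']
      have hs : ∀ i : ℕ, d+2-(i+1) = d+1-i := fun i => by omega
      simp only [Nat.succ_ne_zero, if_false, eq_self_iff_true, if_true, zero_smul, add_zero,
        Nat.add_sub_cancel, hs]
      rw [Finset.sum_range_succ]
      simp only [show d+1+1 = d+2 from rfl, eq_self_iff_true, if_true, zero_smul, add_zero]
      refine Finset.sum_congr rfl (fun j hj => ?_)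
      have hj' : j < d+1 := Finset.mem_range.mp hj
      rw [if_neg (by omega)]
      have h1 : d+1-(j+1) = d-j := by omega
      rw [h1]
    rw [step1, PP, Finset.mul_sum, Finset.smul_sum]
    refine Finset.sum_congr rfl (fun j hj => ?_)
    have hj' : j ≤ d := by have := Finset.mem_range.mp hj; omega
    have h2 : d+1-j = (d-j)+1 := by omega
    rw [h2, mul_smul_comm, smul_smul]
    congr 1
    ring
  rw [e1, e2, e3, ← Finset.sum_add_distrib, ← Finset.sum_sub_distrib]
  refine Finset.sum_congr rfl (fun a ha => ?_)
  rw [← add_smul, ← sub_smul]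
  congr 1
  have ha' : a < d+3 := Finset.mem_range.mp ha
  split_ifs with h1 h2 h2
  · omega
  · -- a = 0
    subst h1
    simp only [Nat.sub_zero, Nat.centralBinom_zero, Nat.cast_one, one_mul, zero_add, sub_zero]
    have h := hcb (d+1)
    push_cast at h ⊢
    linear_combination h
  · -- a = d+2
    subst h2
    simp only [Nat.add_sub_cancel, Nat.sub_self, Nat.centralBinom_zero, Nat.cast_one,
      mul_one, add_zero, sub_zero]
    have hn : d+2-1 = d+1 := by omega
    rw [hn]
    have h := hcb (d+1)
    push_cast at h ⊢
    linear_combination h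
  · -- middle
    obtain ⟨p, rfl⟩ : ∃ p, a = p+1 := ⟨a-1, by omega⟩
    have hpd : p ≤ d := by omega
    obtain ⟨q, hq⟩ : ∃ q, d = p + q := ⟨d - p, by omega⟩
    subst hq
    have n1 : p+1-1 = p := by omega
    have n2 : p+q+2-(p+1) = q+1 := by omega
    have n3 : p+q+1-(p+1) = q := by omega
    rw [n1, n2, n3]
    push_cast
    linear_combination midP (p:ℝ) (q:ℝ) _ _ _ _ (hcb p) (hcb q) (by positivity) (by positivity)

lemma recQ (d : ℕ) :
    ((d:ℝ)+2) • QQ (d+2) =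
      (4*(d:ℝ)+6) • QQ (d+1) - (16*((d:ℝ)+1)) • (pA * pB * QQ d) := by
  have e1 : ((d:ℝ)+2) • QQ (d+2)
      = ∑ m ∈ range (d+3),
          (((d:ℝ)+2) * ((2:ℝ)^(d+2) * (Nat.centralBinom m : ℝ) * ((d+2).choose (2*m) : ℝ)))
            • (X:ℝ[X])^(2*m) := by
    rw [QQ, Finset.smul_sum]
    exact Finset.sum_congr rfl (fun j _ => smul_smul _ _ _)
  have e2 : (4*(d:ℝ)+6) • QQ (d+1)
      = ∑ m ∈ range (d+3),
          ((4*(d:ℝ)+6) * ((2:ℝ)^(d+1) * (Nat.centralBinom m : ℝ) * ((d+1).choose (2*m) : ℝ)))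
            • (X:ℝ[X])^(2*m) := by
    rw [QQ, Finset.smul_sum]
    rw [show (∑ m ∈ range (d+2), (4*(d:ℝ)+6) •
        (((2:ℝ)^(d+1) * (Nat.centralBinom m : ℝ) * ((d+1).choose (2*m) : ℝ)) • (X:ℝ[X])^(2*m)))
        = ∑ m ∈ range (d+2), ((4*(d:ℝ)+6) * ((2:ℝ)^(d+1) * (Nat.centralBinom m : ℝ)
            * ((d+1).choose (2*m) : ℝ))) • (X:ℝ[X])^(2*m)
      from Finset.sum_congr rfl (fun j _ => smul_smul _ _ _)]
    refine Finset.sum_subset (Finset.range_subset_range.mpr (by omega)) (fun x hx hx' => ?_)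
    have hx1 : x = d+2 := by
      have := Finset.mem_range.mp hx
      have h9 : ¬ x < d + 2 := fun h => hx' (Finset.mem_range.mpr h)
      omega
    subst hx1
    rw [Nat.choose_eq_zero_of_lt (by omega)]
    simp
  have e3 : (16*((d:ℝ)+1)) • (pA * pB * QQ d)
      = ∑ m ∈ range (d+3),
          ((4*((d:ℝ)+1) * ((2:ℝ)^d * (Nat.centralBinom m : ℝ) * (d.choose (2*m) : ℝ))
            - (if m = 0 then (0:ℝ) else
                16*((d:ℝ)+1) * ((2:ℝ)^d * (Nat.centralBinom (m-1) : ℝ) * (d.choose (2*(m-1)) : ℝ)))))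
            • (X:ℝ[X])^(2*m) := by
    have t1 : (∑ m ∈ range (d+3),
          (4*((d:ℝ)+1) * ((2:ℝ)^d * (Nat.centralBinom m : ℝ) * (d.choose (2*m) : ℝ)))
            • (X:ℝ[X])^(2*m))
        = (4*((d:ℝ)+1)) • QQ d := by
      rw [QQ, Finset.smul_sum]
      rw [show (∑ m ∈ range (d+1), (4*((d:ℝ)+1)) •
          (((2:ℝ)^d * (Nat.centralBinom m : ℝ) * (d.choose (2*m) : ℝ)) • (X:ℝ[X])^(2*m)))
          = ∑ m ∈ range (d+1), (4*((d:ℝ)+1) * ((2:ℝ)^d * (Nat.centralBinom m : ℝ)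
              * (d.choose (2*m) : ℝ))) • (X:ℝ[X])^(2*m)
        from Finset.sum_congr rfl (fun j _ => smul_smul _ _ _)]
      refine (Finset.sum_subset (Finset.range_subset_range.mpr (by omega)) (fun x hx hx' => ?_)).symm
      have hx1 : x = d+1 ∨ x = d+2 := by
        have := Finset.mem_range.mp hx
        have h9 : ¬ x < d + 1 := fun h => hx' (Finset.mem_range.mpr h)
        omega
      have hz : d.choose (2*x) = 0 := Nat.choose_eq_zero_of_lt (by omega)
      rw [hz]
      simp
    have t2 : (∑ m ∈ range (d+3),
          (if m = 0 then (0:ℝ) else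
            16*((d:ℝ)+1) * ((2:ℝ)^d * (Nat.centralBinom (m-1) : ℝ) * (d.choose (2*(m-1)) : ℝ)))
            • (X:ℝ[X])^(2*m))
        = (16*((d:ℝ)+1)) • ((X:ℝ[X])^2 * QQ d) := by
      rw [Finset.sum_range_succ']
      simp only [Nat.succ_ne_zero, if_false, eq_self_iff_true, if_true, zero_smul, add_zero,
        Nat.add_sub_cancel]
      rw [Finset.sum_range_succ]
      rw [Nat.choose_eq_zero_of_lt (show d < 2*(d+1) by omega)]
      simp only [Nat.cast_zero, mul_zero, zero_smul, add_zero]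
      rw [QQ, Finset.mul_sum, Finset.smul_sum]
      refine Finset.sum_congr rfl (fun j hj => ?_)
      rw [mul_smul_comm, smul_smul]
      have hx : (X:ℝ[X])^2 * X^(2*j) = X^(2*(j+1)) := by
        rw [← pow_add]; congr 1; omega
      rw [hx]
    rw [hABmul, sub_mul, smul_sub, ← smul_eq_C_mul, smul_smul,
      show (16*((d:ℝ)+1)) * (1/4) = 4*((d:ℝ)+1) from by ring, ← t1, ← t2,
      ← Finset.sum_sub_distrib]
    exact Finset.sum_congr rfl (fun m _ => (sub_smul _ _ _).symm)
  rw [e1, e2, e3, ← Finset.sum_sub_distrib]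
  refine Finset.sum_congr rfl (fun m hm => ?_)
  rw [← sub_smul]
  congr 1
  rcases Nat.eq_zero_or_pos m with rfl | hpos
  · simp only [eq_self_iff_true, if_true, mul_zero, Nat.choose_zero_right,
      Nat.centralBinom_zero, Nat.cast_one, sub_zero]
    push_cast
    ring
  · obtain ⟨μ, rfl⟩ : ∃ μ, m = μ+1 := ⟨m-1, by omega⟩
    rw [if_neg (Nat.succ_ne_zero μ)]
    simp only [Nat.add_sub_cancel]
    have e : 2*(μ+1) = 2*μ+2 := by omega
    rw [e]
    have hA2 : (d+2).choose (2*μ+2) = (d+1).choose (2*μ+1) + (d+1).choose (2*μ+2) :=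
      Nat.choose_succ_succ (d+1) (2*μ+1)
    have hA1 : (d+1).choose (2*μ+2) = d.choose (2*μ+1) + d.choose (2*μ+2) :=
      Nat.choose_succ_succ d (2*μ+1)
    have hB : (d+1).choose (2*μ+1) = d.choose (2*μ) + d.choose (2*μ+1) :=
      Nat.choose_succ_succ d (2*μ)
    have h2 := hchooseR d (2*μ)
    push_cast at h2
    have key := midQ (d:ℝ) (μ:ℝ) ((d.choose (2*μ+2) : ℕ) : ℝ) ((d.choose (2*μ+1) : ℕ) : ℝ)
      ((d.choose (2*μ) : ℕ) : ℝ) ((Nat.centralBinom (μ+1) : ℕ) : ℝ)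
      ((Nat.centralBinom μ : ℕ) : ℝ) (by push_cast; push_cast at *; exact_mod_cast hcb μ)
      h2 (by positivity)
    rw [hA2, hA1, hB]
    push_cast
    push_cast at key
    linear_combination ((2:ℝ)^d) * key

lemma base0 : PP 0 = QQ 0 := by
  simp [PP, QQ]

lemma base1 : PP 1 = QQ 1 := by
  have hc1 : Nat.centralBinom 1 = 2 := by decide
  have h : pB + pA = 1 := by rw [add_comm]; exact hABone
  simp [PP, QQ, Finset.sum_range_succ, hc1]
  rw [← smul_add, h]

lemma P_eq_Q (d : ℕ) : PP d = QQ d := by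
  suffices h : ∀ n : ℕ, PP n = QQ n ∧ PP (n+1) = QQ (n+1) from (h d).1
  intro n
  induction n with
  | zero => exact ⟨base0, base1⟩
  | succ k ih =>
    refine ⟨ih.2, ?_⟩
    have h1 := recP k
    have h2 := recQ k
    rw [ih.1, ih.2] at h1
    have h3 : ((k:ℝ)+2) • PP (k+2) = ((k:ℝ)+2) • QQ (k+2) := by rw [h1, h2]
    have h4 : ((k:ℝ)+2) ≠ 0 := by positivity
    exact smul_right_injective _ h4 h3

lemma coefEq (d j : ℕ) (hj : j ≤ d) :
    (d.choose j : ℝ) ^ 2 * (((2*d).choose (2*j) : ℝ))⁻¹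
      = (((2*d).choose d : ℝ))⁻¹ * ((Nat.centralBinom j : ℝ) * (Nat.centralBinom (d-j) : ℝ)) := by
  have h1 : ((2*d).choose (2*j) : ℝ) ≠ 0 := by
    exact_mod_cast (Nat.choose_pos (by omega)).ne'
  have h2 : ((2*d).choose d : ℝ) ≠ 0 := by
    exact_mod_cast (Nat.choose_pos (by omega)).ne'
  have c1 : (d.choose j : ℝ) = (d.factorial : ℝ) / (j.factorial * (d-j).factorial) :=
    Nat.cast_choose ℝ hj
  have c2 : ((2*d).choose (2*j) : ℝ)
      = ((2*d).factorial : ℝ) / ((2*j).factorial * ((2*(d-j)) ).factorial) := by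
    have := Nat.cast_choose ℝ (show 2*j ≤ 2*d by omega)
    rwa [show 2*d - 2*j = 2*(d-j) by omega] at this
  have c3 : ((2*d).choose d : ℝ) = ((2*d).factorial : ℝ) / (d.factorial * d.factorial) := by
    have := Nat.cast_choose ℝ (show d ≤ 2*d by omega)
    rwa [show 2*d - d = d by omega] at this
  have c4 : (Nat.centralBinom j : ℝ) = ((2*j).factorial : ℝ) / (j.factorial * j.factorial) := by
    rw [Nat.centralBinom]
    have := Nat.cast_choose ℝ (show j ≤ 2*j by omega)
    rwa [show 2*j - j = j by omega] at this
  have c5 : (Nat.centralBinom (d-j) : ℝ)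
      = ((2*(d-j)).factorial : ℝ) / ((d-j).factorial * (d-j).factorial) := by
    rw [Nat.centralBinom]
    have := Nat.cast_choose ℝ (show d-j ≤ 2*(d-j) by omega)
    rwa [show 2*(d-j) - (d-j) = d-j by omega] at this
  rw [c1]
  rw [c2, c3] at *
  rw [c4, c5]
  have f1 : (Nat.factorial (2*d) : ℝ) ≠ 0 := by exact_mod_cast (Nat.factorial_pos _).ne'
  have f2 : (Nat.factorial d : ℝ) ≠ 0 := by exact_mod_cast (Nat.factorial_pos _).ne'
  have f3 : (Nat.factorial j : ℝ) ≠ 0 := by exact_mod_cast (Nat.factorial_pos _).ne'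
  have f4 : (Nat.factorial (d-j) : ℝ) ≠ 0 := by exact_mod_cast (Nat.factorial_pos _).ne'
  have f5 : (Nat.factorial (2*j) : ℝ) ≠ 0 := by exact_mod_cast (Nat.factorial_pos _).ne'
  have f6 : (Nat.factorial (2*(d-j)) : ℝ) ≠ 0 := by exact_mod_cast (Nat.factorial_pos _).ne'
  field_simp

theorem stmt_5 (d : ℕ) (hd : 0 < d) (s : ℕ) :
    (∑ j ∈ Finset.range (d + 1),
        Polynomial.C ((d.choose j : ℝ) ^ 2 * ((2 * d).choose (2 * j) : ℝ)⁻¹) *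
          (Polynomial.C (1 / 2 : ℝ) + Polynomial.X) ^ j *
          (Polynomial.C (1 / 2 : ℝ) - Polynomial.X) ^ (d - j)).coeff s
    = if Odd s then 0
      else 2 ^ d * (d.choose s : ℝ) * (s.choose (s / 2) : ℝ) / ((2 * d).choose d : ℝ) := by
  have hsum : (∑ j ∈ Finset.range (d + 1),
        Polynomial.C ((d.choose j : ℝ) ^ 2 * ((2 * d).choose (2 * j) : ℝ)⁻¹) *
          (Polynomial.C (1 / 2 : ℝ) + Polynomial.X) ^ j *
          (Polynomial.C (1 / 2 : ℝ) - Polynomial.X) ^ (d - j))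
      = (((2*d).choose d : ℝ))⁻¹ • PP d := by
    rw [PP, Finset.smul_sum]
    refine Finset.sum_congr rfl (fun j hj => ?_)
    have hj' : j ≤ d := by have := Finset.mem_range.mp hj; omega
    rw [smul_smul, ← coefEq d j hj', mul_assoc, ← Polynomial.smul_eq_C_mul]
    rfl
  rw [hsum, P_eq_Q, Polynomial.coeff_smul, QQ, Polynomial.finset_sum_coeff]
  simp only [Polynomial.coeff_smul, Polynomial.coeff_X_pow, smul_eq_mul]
  by_cases hodd : Odd s
  · rw [if_pos hodd]
    rw [Finset.sum_eq_zero, mul_zero]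
    intro m _
    rw [if_neg (by obtain ⟨t, ht⟩ := hodd; omega), mul_zero]
  · rw [if_neg hodd]
    have hev : 2 * (s/2) = s := by
      have : Even s := Nat.not_odd_iff_even.mp hodd
      obtain ⟨t, ht⟩ := this
      omega
    have hconv : ∀ m ∈ Finset.range (d+1),
        ((2:ℝ)^d * (Nat.centralBinom m : ℝ) * (d.choose (2*m) : ℝ)) * (if s = 2*m then (1:ℝ) else 0)
          = (if m = s/2 then ((2:ℝ)^d * (Nat.centralBinom m : ℝ) * (d.choose (2*m) : ℝ)) else 0) := by
      intro m _
      by_cases hm : m = s/2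
      · rw [if_pos (by omega), if_pos hm, mul_one]
      · rw [if_neg (by omega), if_neg hm, mul_zero]
    rw [Finset.sum_congr rfl hconv, Finset.sum_ite_eq']
    by_cases hsd : s/2 ∈ Finset.range (d+1)
    · rw [if_pos hsd, hev]
      have hcb : (Nat.centralBinom (s/2) : ℝ) = (s.choose (s/2) : ℝ) := by
        rw [Nat.centralBinom, hev]
      rw [hcb]
      field_simp
    · rw [if_neg hsd]
      have hds : d < s := by
        have := fun h => hsd (Finset.mem_range.mpr h)
        have h9 : ¬ s/2 < d+1 := this
        omega
      rw [Nat.choose_eq_zero_of_lt hds]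
      simp
end

section
/- For every fixed nonnegative integer k, the formal power series identity Σ_{d=0}^{∞} C(2d,d)·C(d,k)·y^d = C(2k,k)·y^k·(1-4y)^{-(k+1/2)} holds, in the sense that the d-th derivative at 0 of the function f_k(y) = C(2k,k)·y^k/(1-4y)^{k+1/2} equals C(2d,d)·C(d,k)·d!. -/
open Finset Real Filter

noncomputable def Qf (k m : ℕ) (y : ℝ) : ℝ :=
  (∏ i ∈ Finset.range m, (4 * ((k : ℝ) + 1/2 + i))) * (1 - 4*y) ^ (-((k:ℝ) + 1/2 + m))

lemma Qf_hasDerivAt (k m : ℕ) {y : ℝ} (hy : y < 4⁻¹) :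
    HasDerivAt (fun y => Qf k m y) (Qf k (m+1) y) y := by
  have hb : (0:ℝ) < 1 - 4*y := by nlinarith
  have h1 : HasDerivAt (fun y : ℝ => 1 - 4*y) (-4) y := by
    simpa using ((hasDerivAt_id y).const_mul (4:ℝ)).const_sub 1
  have h2 := h1.rpow_const (p := -((k:ℝ)+1/2+m)) (Or.inl hb.ne')
  have h3 := h2.const_mul (∏ i ∈ Finset.range m, (4 * ((k : ℝ) + 1/2 + i)))
  have he : (-((k:ℝ)+1/2+(m:ℝ)) - 1) = -((k:ℝ)+1/2+((m+1 : ℕ):ℝ)) := by push_cast; ring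
  simp only [Qf]
  rw [Finset.prod_range_succ]
  refine h3.congr_deriv ?_
  rw [he]
  push_cast
  ring

lemma sum_id (k n : ℕ) (c y : ℝ) (Q : ℕ → ℝ) :
    ∑ j ∈ Finset.range (n+1), (c * (n.choose j:ℝ) * (k.descFactorial j:ℝ)) *
      ((↑(k-j) * y^(k-j-1)) * Q (n-j) + y^(k-j) * Q (n-j+1))
    = ∑ j ∈ Finset.range (n+2),
        (c * ((n+1).choose j:ℝ) * (k.descFactorial j:ℝ)) * (y^(k-j) * Q (n+1-j)) := by
  set A : ℕ → ℝ := fun j => (c * (n.choose j:ℝ) * (k.descFactorial j:ℝ)) *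
      ((↑(k-j) * y^(k-j-1)) * Q (n-j)) with hA
  set B : ℕ → ℝ := fun j => (c * (n.choose j:ℝ) * (k.descFactorial j:ℝ)) *
      (y^(k-j) * Q (n+1-j)) with hB
  have hLHS : ∑ j ∈ Finset.range (n+1), (c * (n.choose j:ℝ) * (k.descFactorial j:ℝ)) *
      ((↑(k-j) * y^(k-j-1)) * Q (n-j) + y^(k-j) * Q (n-j+1))
      = ∑ j ∈ Finset.range (n+1), (A j + B j) := by
    refine Finset.sum_congr rfl fun j hj => ?_
    have hj' : j ≤ n := by simpa [Nat.lt_succ_iff] using hj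
    have h3 : n - j + 1 = n + 1 - j := by omega
    rw [hA, hB]; simp only []
    rw [h3, mul_add]
  have hFsucc : ∀ i ∈ Finset.range (n+1),
      (c * ((n+1).choose (i+1):ℝ) * (k.descFactorial (i+1):ℝ)) * (y^(k-(i+1)) * Q (n+1-(i+1)))
      = A i + B (i+1) := by
    intro i hi
    have h1 : k - (i+1) = k - i - 1 := by omega
    have h2 : n + 1 - (i+1) = n - i := by omega
    rw [hA, hB]; simp only []
    rw [h1, h2, Nat.choose_succ_succ, Nat.descFactorial_succ]
    simp only [Nat.succ_eq_add_one]
    push_cast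
    ring
  have hF0 : (c * ((n+1).choose 0:ℝ) * (k.descFactorial 0:ℝ)) * (y^(k-0) * Q (n+1-0)) = B 0 := by
    simp [hB]
  have hBtop : B (n+1) = 0 := by simp [hB, Nat.choose_succ_self]
  calc ∑ j ∈ Finset.range (n+1), (c * (n.choose j:ℝ) * (k.descFactorial j:ℝ)) *
      ((↑(k-j) * y^(k-j-1)) * Q (n-j) + y^(k-j) * Q (n-j+1))
      = ∑ j ∈ Finset.range (n+1), (A j + B j) := hLHS
    _ = ∑ j ∈ Finset.range (n+1), A j + (∑ j ∈ Finset.range (n+1), B j + B (n+1)) := by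
        rw [hBtop, add_zero, Finset.sum_add_distrib]
    _ = ∑ j ∈ Finset.range (n+1), A j + ∑ j ∈ Finset.range (n+2), B j := by
        rw [Finset.sum_range_succ B (n+1)]
    _ = ∑ j ∈ Finset.range (n+1), A j + (∑ i ∈ Finset.range (n+1), B (i+1) + B 0) := by
        rw [Finset.sum_range_succ' B (n+1)]
    _ = ∑ i ∈ Finset.range (n+1), (A i + B (i+1)) + B 0 := by
        rw [Finset.sum_add_distrib, add_assoc]
    _ = ∑ i ∈ Finset.range (n+1),
          (c * ((n+1).choose (i+1):ℝ) * (k.descFactorial (i+1):ℝ)) * (y^(k-(i+1)) * Q (n+1-(i+1)))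
        + (c * ((n+1).choose 0:ℝ) * (k.descFactorial 0:ℝ)) * (y^(k-0) * Q (n+1-0)) := by
        rw [Finset.sum_congr rfl hFsucc, hF0]
    _ = ∑ j ∈ Finset.range (n+2),
        (c * ((n+1).choose j:ℝ) * (k.descFactorial j:ℝ)) * (y^(k-j) * Q (n+1-j)) := by
        rw [Finset.sum_range_succ' (fun j => (c * ((n+1).choose j:ℝ) * (k.descFactorial j:ℝ)) * (y^(k-j) * Q (n+1-j))) (n+1)]

lemma S_formula (k : ℕ) (c : ℝ) (n : ℕ) :
    ∀ y ∈ Set.Iio (4⁻¹:ℝ),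
      iteratedDeriv n (fun y : ℝ => c * (y ^ k * (1 - 4*y) ^ (-((k:ℝ)+1/2)))) y
      = ∑ j ∈ Finset.range (n+1),
          (c * (n.choose j : ℝ) * (k.descFactorial j : ℝ)) * (y^(k-j) * Qf k (n-j) y) := by
  induction n with
  | zero =>
    intro y hy
    simp [Qf]
  | succ n ih =>
    intro y hy
    rw [iteratedDeriv_succ]
    have hev : iteratedDeriv n (fun y : ℝ => c * (y ^ k * (1 - 4*y) ^ (-((k:ℝ)+1/2))))
        =ᶠ[nhds y] (fun y => ∑ j ∈ Finset.range (n+1),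
          (c * (n.choose j : ℝ) * (k.descFactorial j : ℝ)) * (y^(k-j) * Qf k (n-j) y)) :=
      Filter.eventuallyEq_of_mem (isOpen_Iio.mem_nhds hy) ih
    rw [hev.deriv_eq]
    have hd : HasDerivAt (fun y => ∑ j ∈ Finset.range (n+1),
          (c * (n.choose j : ℝ) * (k.descFactorial j : ℝ)) * (y^(k-j) * Qf k (n-j) y))
        (∑ j ∈ Finset.range (n+1), (c * (n.choose j : ℝ) * (k.descFactorial j : ℝ)) *
          ((↑(k-j) * y^(k-j-1)) * Qf k (n-j) y + y^(k-j) * Qf k (n-j+1) y)) y := by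
      refine HasDerivAt.fun_sum fun j hj => ?_
      exact ((hasDerivAt_pow (k-j) y).mul (Qf_hasDerivAt k (n-j) hy)).const_mul _
    rw [hd.deriv]
    exact sum_id k n c y (fun m => Qf k m y)

lemma key_id (k m : ℕ) :
    ((2*k).choose k : ℝ) * (k.factorial : ℝ) *
      ∏ i ∈ Finset.range m, (4*((k:ℝ)+1/2+(i:ℝ)))
    = ((2*(k+m)).choose (k+m) : ℝ) * ((k+m).factorial : ℝ) := by
  induction m with
  | zero => simp
  | succ m ih =>
    rw [Finset.prod_range_succ, ← mul_assoc, ih]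
    set n := k + m with hn
    have h1 : k + (m+1) = n + 1 := by omega
    rw [h1]
    have e1 : ((2*n).choose n : ℝ) = (2*n).factorial / (n.factorial * n.factorial) := by
      rw [Nat.cast_choose ℝ (by omega : n ≤ 2*n), show 2*n - n = n from by omega]
    have e2 : ((2*(n+1)).choose (n+1) : ℝ)
        = (2*(n+1)).factorial / ((n+1).factorial * (n+1).factorial) := by
      rw [Nat.cast_choose ℝ (by omega : n+1 ≤ 2*(n+1)),
        show 2*(n+1) - (n+1) = n+1 from by omega]
    have e3 : (2*(n+1)) = (2*n+1) + 1 := by omega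
    have e4 : ((2*n+1+1).factorial : ℝ) = (2*n+1+1) * ((2*n+1) * (2*n).factorial) := by
      rw [Nat.factorial_succ, Nat.factorial_succ]; push_cast; ring
    have e5 : ((n+1).factorial : ℝ) = (n+1) * n.factorial := by
      rw [Nat.factorial_succ]; push_cast; ring
    have hk : (k:ℝ) + 1/2 + (m:ℝ) = (n:ℝ) + 1/2 := by rw [hn]; push_cast; ring
    rw [e1, e2, e3, e4, e5, hk]
    have hnf : (n.factorial : ℝ) ≠ 0 := Nat.cast_ne_zero.mpr n.factorial_ne_zero
    have hn1 : ((n:ℝ) + 1) ≠ 0 := by positivity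
    field_simp
    ring

theorem stmt_6 (k d : ℕ) :
    iteratedDeriv d
      (fun y : ℝ => ((2 * k).choose k : ℝ) * y ^ k / (1 - 4 * y) ^ ((k : ℝ) + 1 / 2)) 0
    = ((2 * d).choose d : ℝ) * (d.choose k : ℝ) * (d.factorial : ℝ) := by
  have h0 : (0:ℝ) ∈ Set.Iio (4⁻¹:ℝ) := by norm_num
  have hev : (fun y : ℝ => ((2 * k).choose k : ℝ) * y ^ k / (1 - 4 * y) ^ ((k : ℝ) + 1 / 2))
      =ᶠ[nhds (0:ℝ)]
      (fun y : ℝ => ((2*k).choose k : ℝ) * (y ^ k * (1 - 4*y) ^ (-((k:ℝ)+1/2)))) := by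
    refine Filter.eventuallyEq_of_mem (isOpen_Iio.mem_nhds h0) fun y hy => ?_
    have hb : (0:ℝ) < 1 - 4*y := by
      have : y < 4⁻¹ := hy
      nlinarith
    rw [Real.rpow_neg hb.le, div_eq_mul_inv]
    ring
  rw [hev.iteratedDeriv_eq d, S_formula k _ d 0 h0]
  have hQ0 : ∀ m, Qf k m 0 = ∏ i ∈ Finset.range m, (4*((k:ℝ)+1/2+(i:ℝ))) := by
    intro m
    simp [Qf]
  by_cases hkd : k ≤ d
  · rw [Finset.sum_eq_single k]
    · rw [hQ0, Nat.sub_self, pow_zero, Nat.descFactorial_self, one_mul]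
      have hkey := key_id k (d - k)
      rw [show k + (d - k) = d from by omega] at hkey
      linear_combination (d.choose k : ℝ) * hkey
    · intro j hj hjk
      rcases lt_or_gt_of_ne hjk with h | h
      · rw [zero_pow (by omega : k - j ≠ 0)]
        ring
      · rw [Nat.descFactorial_eq_zero_iff_lt.mpr h]
        push_cast
        ring
    · intro h
      exact absurd (Finset.mem_range.mpr (by omega)) h
  · push_neg at hkd
    rw [Nat.choose_eq_zero_of_lt hkd]
    rw [Finset.sum_eq_zero]
    · ring
    · intro j hj
      have : j < d + 1 := Finset.mem_range.mp hj
      rw [zero_pow (by omega : k - j ≠ 0)]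
      ring
end

section
/- Let n, d, k be positive integers with k ≥ d. Then the ratio C(n+k-d-1, k-d)/C(n+k-1, k) is at least 1 - d(n-1)/(k+1). -/
lemma stmt_12_aux (a k : ℕ) (ha : 1 ≤ a) : ∀ m, m ≤ k →
    (k+1) * (a+k-m).choose (k-m) ≤ (a+k).choose k * (a+k-m) ∧
    ((a+k).choose k : ℤ) * ((k:ℤ)+1 - (m:ℤ)*(a:ℤ)) ≤ ((k:ℤ)+1) * ((a+k-m).choose (k-m) : ℤ) := by
  intro m
  induction m with
  | zero =>
    intro _
    simp only [Nat.sub_zero, Nat.cast_zero, zero_mul, sub_zero]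
    constructor
    · calc (k+1) * (a+k).choose k ≤ (a+k) * (a+k).choose k :=
            Nat.mul_le_mul_right _ (by omega)
        _ = (a+k).choose k * (a+k) := Nat.mul_comm _ _
    · nlinarith [Int.natCast_nonneg ((a+k).choose k)]
  | succ m ih =>
    intro h
    obtain ⟨hB, hA⟩ := ih (by omega)
    obtain ⟨j, hj⟩ : ∃ j, k - m = j + 1 := ⟨k - m - 1, by omega⟩
    have h1 : a + k - m = a + j + 1 := by omega
    have h2 : a + k - (m+1) = a + j := by omega
    have h3 : k - (m+1) = j := by omega
    rw [hj, h1] at hB hA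
    rw [h2, h3]
    have key : (a+j+1) * (a+j).choose j = (a+j+1).choose (j+1) * (j+1) :=
      Nat.add_one_mul_choose_eq (a+j) j
    have keyZ : ((a:ℤ)+(j:ℤ)+1) * ((a+j).choose j : ℤ)
        = ((a+j+1).choose (j+1) : ℤ) * ((j:ℤ)+1) := by exact_mod_cast key
    have hBZ : ((k:ℤ)+1) * ((a+j+1).choose (j+1) : ℤ)
        ≤ ((a+k).choose k : ℤ) * ((a:ℤ)+(j:ℤ)+1) := by exact_mod_cast hB
    have hc : (0:ℤ) < (a:ℤ)+(j:ℤ)+1 := by positivity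
    have haZ : (1:ℤ) ≤ (a:ℤ) := by exact_mod_cast ha
    have hAnn : (0:ℤ) ≤ ((a+k).choose k : ℤ) := Int.natCast_nonneg _
    have heq : ((k:ℤ)+1) * ((a+j).choose j : ℤ) * ((a:ℤ)+(j:ℤ)+1)
        = ((k:ℤ)+1) * ((a+j+1).choose (j+1) : ℤ) * ((j:ℤ)+1) := by
      linear_combination ((k:ℤ)+1) * keyZ
    have hs1 : ((k:ℤ)+1) * ((a+j+1).choose (j+1) : ℤ) * ((j:ℤ)+1)
        ≤ ((a+k).choose k : ℤ) * ((a:ℤ)+(j:ℤ)+1) * ((j:ℤ)+1) :=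
      mul_le_mul_of_nonneg_right hBZ (by positivity)
    -- Part B at m+1
    have partB : ((k:ℤ)+1) * ((a+j).choose j : ℤ) ≤ ((a+k).choose k : ℤ) * ((a:ℤ)+(j:ℤ)) := by
      have hmul : ((k:ℤ)+1) * ((a+j).choose j : ℤ) * ((a:ℤ)+(j:ℤ)+1)
          ≤ ((a+k).choose k : ℤ) * ((a:ℤ)+(j:ℤ)) * ((a:ℤ)+(j:ℤ)+1) := by
        have hja : (j:ℤ)+1 ≤ (a:ℤ)+(j:ℤ) := by linarith
        have hs2 : ((a+k).choose k : ℤ) * ((a:ℤ)+(j:ℤ)+1) * ((j:ℤ)+1)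
            ≤ ((a+k).choose k : ℤ) * ((a:ℤ)+(j:ℤ)+1) * ((a:ℤ)+(j:ℤ)) :=
          mul_le_mul_of_nonneg_left hja (by positivity)
        nlinarith [hs1, hs2, heq]
      exact le_of_mul_le_mul_right hmul hc
    constructor
    · exact_mod_cast partB
    · have ht1 : ((a+k).choose k : ℤ) * ((k:ℤ)+1 - (m:ℤ)*(a:ℤ)) * ((a:ℤ)+(j:ℤ)+1)
          ≤ ((k:ℤ)+1) * ((a+j+1).choose (j+1) : ℤ) * ((a:ℤ)+(j:ℤ)+1) :=
        mul_le_mul_of_nonneg_right hA (by positivity)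
      have ht2 : ((k:ℤ)+1) * ((a+j+1).choose (j+1) : ℤ) * (a:ℤ)
          ≤ ((a+k).choose k : ℤ) * ((a:ℤ)+(j:ℤ)+1) * (a:ℤ) :=
        mul_le_mul_of_nonneg_right hBZ (by positivity)
      have hmul : ((a+k).choose k : ℤ) * ((k:ℤ)+1 - ((m:ℤ)+1)*(a:ℤ)) * ((a:ℤ)+(j:ℤ)+1)
          ≤ ((k:ℤ)+1) * ((a+j).choose j : ℤ) * ((a:ℤ)+(j:ℤ)+1) := by
        linarith [ht1, ht2, heq]
      have := le_of_mul_le_mul_right hmul hc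
      calc ((a+k).choose k : ℤ) * ((k:ℤ)+1 - ((m+1 : ℕ):ℤ)*(a:ℤ))
          = ((a+k).choose k : ℤ) * ((k:ℤ)+1 - ((m:ℤ)+1)*(a:ℤ)) := by push_cast; ring
        _ ≤ ((k:ℤ)+1) * ((a+j).choose j : ℤ) := this

theorem stmt_12 (n d k : ℕ) (hn : 0 < n) (hd : 0 < d) (hk : d ≤ k) :
    (1 : ℝ) - (d : ℝ) * ((n : ℝ) - 1) / ((k : ℝ) + 1)
      ≤ ((n + k - d - 1).choose (k - d) : ℝ) / ((n + k - 1).choose k : ℝ) := by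
  obtain ⟨a, rfl⟩ : ∃ a, n = a + 1 := ⟨n - 1, by omega⟩
  have e1 : a + 1 + k - d - 1 = a + k - d := by omega
  have e2 : a + 1 + k - 1 = a + k := by omega
  rw [e1, e2]
  have hC2 : (0:ℝ) < ((a+k).choose k : ℝ) := by
    exact_mod_cast Nat.choose_pos (by omega : k ≤ a + k)
  have hk1 : (0:ℝ) < (k:ℝ)+1 := by positivity
  rcases Nat.eq_zero_or_pos a with rfl | ha
  · have : k - d ≤ 0 + k - d := by omega
    simp only [Nat.zero_add, Nat.choose_self]
    push_cast
    rw [div_self (by norm_num : (1:ℝ) ≠ 0)]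
    have : (d:ℝ) * ((1:ℝ) - 1) / ((k:ℝ)+1) = 0 := by ring
    simp [this]
  · have hAineq := (stmt_12_aux a k ha d hk).2
    have hR : ((a+k).choose k : ℝ) * ((k:ℝ)+1 - (d:ℝ)*(a:ℝ))
        ≤ ((k:ℝ)+1) * ((a+k-d).choose (k-d) : ℝ) := by exact_mod_cast hAineq
    have hsplit : (1:ℝ) - (d:ℝ) * (((a:ℝ)+1) - 1) / ((k:ℝ)+1)
        = ((k:ℝ)+1 - (d:ℝ)*(a:ℝ)) / ((k:ℝ)+1) := by field_simp; ring
    push_cast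
    rw [hsplit, div_le_div_iff₀ hk1 hC2]
    linarith [hR]
end

section
/- Let U = span_ℝ{e₁⊗e₂ + e₂⊗e₁, e₁⊗e₁ - e₂⊗e₂} ⊆ S²(ℝ²) and let Π_U be the orthogonal projection onto U. Viewing Π_U as a complex operator on S²(ℂ²), the maximum over unit vectors v ∈ ℂ² of ⟨v⊗v, Π_U (v⊗v)⟩ equals 1, attained at v = (e₁ + i·e₂)/√2. -/
open scoped ComplexConjugate

set_option maxHeartbeats 2000000 in
/-- Let `U = span_ℝ{e₁⊗e₂ + e₂⊗e₁, e₁⊗e₁ - e₂⊗e₂} ⊆ S²(ℝ²)`, complexified, and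
`Π_U` the orthogonal projection onto it.  The maximum of `⟨v⊗v, Π_U (v⊗v)⟩` over
complex unit vectors `v` is `1`, attained at `v = (e₁ + i e₂)/√2`. -/
theorem stmt_15
    (u₁ u₂ : EuclideanSpace ℂ (Fin 2 × Fin 2))
    (hu₁ : u₁ = (WithLp.equiv 2 _).symm fun p : Fin 2 × Fin 2 =>
        if p = (0, 1) ∨ p = (1, 0) then (1 : ℂ) else 0)
    (hu₂ : u₂ = (WithLp.equiv 2 _).symm fun p : Fin 2 × Fin 2 =>
        if p = (0, 0) then (1 : ℂ) else if p = (1, 1) then -1 else 0)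
    (U : Submodule ℂ (EuclideanSpace ℂ (Fin 2 × Fin 2)))
    (hU : U = Submodule.span ℂ {u₁, u₂})
    (tens : EuclideanSpace ℂ (Fin 2) → EuclideanSpace ℂ (Fin 2 × Fin 2))
    (htens : ∀ v, tens v = (WithLp.equiv 2 _).symm fun p : Fin 2 × Fin 2 =>
        (WithLp.equiv 2 _) v p.1 * (WithLp.equiv 2 _) v p.2)
    (v₀ : EuclideanSpace ℂ (Fin 2))
    (hv₀ : v₀ = (WithLp.equiv 2 _).symm
        ![(1 / (Real.sqrt 2 : ℂ)), Complex.I / (Real.sqrt 2 : ℂ)]) :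
    IsGreatest {r : ℝ | ∃ v : EuclideanSpace ℂ (Fin 2), ‖v‖ = 1 ∧
        r = (inner ℂ (tens v)
          ((U.orthogonalProjectionOnto (tens v) : U) : EuclideanSpace ℂ (Fin 2 × Fin 2)) : ℂ).re} 1 ∧
    ‖v₀‖ = 1 ∧
    (inner ℂ (tens v₀)
      ((U.orthogonalProjectionOnto (tens v₀) : U) : EuclideanSpace ℂ (Fin 2 × Fin 2)) : ℂ).re = 1 := by
  have hs2 : (Real.sqrt 2 : ℂ) * (Real.sqrt 2 : ℂ) = 2 := by
    rw [← Complex.ofReal_mul, Real.mul_self_sqrt (by norm_num)]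
    norm_num
  have hinv : ((Real.sqrt 2 : ℂ))⁻¹ * ((Real.sqrt 2 : ℂ))⁻¹ = 1/2 := by
    rw [← mul_inv, hs2]; norm_num
  have hsq2 : ((Real.sqrt 2 : ℂ)) ^ 2 = 2 := by rw [sq, hs2]
  have hsqinv : ((Real.sqrt 2 : ℂ))⁻¹ ^ 2 = 1/2 := by rw [sq, hinv]
  -- norm of v₀
  have hnv₀ : ‖v₀‖ = 1 := by
    have h : (inner ℂ v₀ v₀ : ℂ) = 1 := by
      simp [hv₀, PiLp.inner_apply, Fin.sum_univ_two, Complex.conj_I, map_div₀,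
        Complex.conj_ofReal, div_mul_div_comm, RCLike.inner_apply, -inner_self_eq_norm_sq_to_K]
      rw [hinv]
      ring_nf
    have h3 : (‖v₀‖ : ℝ) ^ 2 = 1 := by
      have := inner_self_eq_norm_sq (𝕜 := ℂ) v₀
      rw [h] at this
      simpa using this.symm
    nlinarith [norm_nonneg v₀]
  -- norm of tens v
  have htn : ∀ v : EuclideanSpace ℂ (Fin 2), ‖v‖ = 1 → ‖tens v‖ = 1 := by
    intro v hv
    have h : (inner ℂ (tens v) (tens v) : ℂ) = (inner ℂ v v : ℂ) * (inner ℂ v v : ℂ) := by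
      simp only [htens, PiLp.inner_apply, WithLp.equiv_symm_apply, PiLp.toLp_apply, WithLp.equiv_apply,
        Fintype.sum_prod_type, map_mul, RCLike.inner_apply]
      rw [Finset.sum_mul_sum]
      congr 1; ext i; congr 1; ext j; ring
    have hv1 : (inner ℂ v v : ℂ) = 1 := by
      rw [inner_self_eq_norm_sq_to_K, hv]; norm_num
    have h3 : (‖tens v‖ : ℝ) ^ 2 = 1 := by
      have h4 := inner_self_eq_norm_sq (𝕜 := ℂ) (tens v)
      rw [h, hv1, one_mul] at h4
      simpa using h4.symm
    nlinarith [norm_nonneg (tens v)]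
  -- the inner product with projection equals squared norm of projection
  have hkey : ∀ x : EuclideanSpace ℂ (Fin 2 × Fin 2),
      (inner ℂ x ((U.orthogonalProjectionOnto x : U) : EuclideanSpace ℂ (Fin 2 × Fin 2)) : ℂ).re
        = ‖((U.orthogonalProjectionOnto x : U) : EuclideanSpace ℂ (Fin 2 × Fin 2))‖ ^ 2 := by
    intro x
    set p : EuclideanSpace ℂ (Fin 2 × Fin 2) := (↑((U.orthogonalProjectionOnto) x) : EuclideanSpace ℂ (Fin 2 × Fin 2)) with hp
    have hz : (inner ℂ (x - p) p : ℂ) = 0 :=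
      U.starProjection_inner_eq_zero x p (U.orthogonalProjectionOnto x).2
    have : (inner ℂ x p : ℂ) = inner ℂ p p := by
      have := inner_sub_left (𝕜 := ℂ) x p p
      rw [hz] at this
      linear_combination -this
    rw [this]
    exact_mod_cast inner_self_eq_norm_sq (𝕜 := ℂ) p
  -- membership of tens v₀ in U
  have hmem : tens v₀ ∈ U := by
    have : tens v₀ = (Complex.I / 2) • u₁ + ((1 : ℂ) / 2) • u₂ := by
      ext p
      fin_cases p <;>
        simp [htens, hv₀, hu₁, hu₂, div_mul_div_comm, Prod.ext_iff] <;>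
        ring_nf <;>
        simp [hsq2, hsqinv, Complex.I_sq] <;> ring
    rw [this, hU]
    exact Submodule.add_mem _
      (Submodule.smul_mem _ _ (Submodule.subset_span (by simp)))
      (Submodule.smul_mem _ _ (Submodule.subset_span (by simp)))
  have hproj₀ : ((U.orthogonalProjectionOnto (tens v₀) : U) : EuclideanSpace ℂ (Fin 2 × Fin 2))
      = tens v₀ := Submodule.starProjection_eq_self_iff.mpr hmem
  refine ⟨⟨⟨v₀, hnv₀, ?_⟩, ?_⟩, hnv₀, ?_⟩
  · rw [hkey, hproj₀, htn v₀ hnv₀]; norm_num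
  · rintro r ⟨v, hv, rfl⟩
    rw [hkey]
    have h1 := Submodule.norm_sq_eq_add_norm_sq_projection (tens v) U
    rw [htn v hv] at h1
    have h2 : ‖((U.orthogonalProjectionOnto (tens v) : U) : EuclideanSpace ℂ (Fin 2 × Fin 2))‖
        = ‖U.orthogonalProjectionOnto (tens v)‖ := Submodule.norm_coe _
    rw [h2]
    nlinarith [sq_nonneg ‖Uᗮ.orthogonalProjectionOnto (tens v)‖]
  · rw [hkey, hproj₀, htn v₀ hnv₀]; norm_num
end

section
/- Let P = [[0,0,1/2],[0,0,0],[1/2,0,0]] be the unique symmetric Gram matrix of p(x,y,z) = xz, and let v = (1/√6, i/√3, -1/√2) ∈ ℂ³. Then v is a unit vector, q(v) = 0 where q(x,y,z) = x² + y² - (1/√3)xz, and v† P v = -1/(2√3). In particular, the minimum of z ↦ z† P z over complex unit vectors in the zero set of q is at most -1/(2√3) < 0 = min of xz over real unit vectors in the zero set of q. -/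
theorem stmt_17 (P : Matrix (Fin 3) (Fin 3) ℂ)
    (hP : P = !![0, 0, 1/2; 0, 0, 0; 1/2, 0, 0])
    (v : Fin 3 → ℂ)
    (hv : v = ![1 / (Real.sqrt 6 : ℂ), Complex.I / (Real.sqrt 3 : ℂ), -(1 / (Real.sqrt 2 : ℂ))]) :
    (∑ i, Complex.normSq (v i)) = 1 ∧
    (v 0) ^ 2 + (v 1) ^ 2 - (1 / (Real.sqrt 3 : ℂ)) * (v 0 * v 2) = 0 ∧
    (∑ i, ∑ j, star (v i) * P i j * v j) = -(1 / (2 * (Real.sqrt 3 : ℂ))) ∧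
    (∃ z : Fin 3 → ℂ, (∑ i, Complex.normSq (z i)) = 1 ∧
      (z 0) ^ 2 + (z 1) ^ 2 - (1 / (Real.sqrt 3 : ℂ)) * (z 0 * z 2) = 0 ∧
      (∑ i, ∑ j, star (z i) * P i j * z j).re ≤ -(1 / (2 * Real.sqrt 3))) ∧
    -(1 / (2 * Real.sqrt 3)) < (0 : ℝ) := by
  have h23 : Real.sqrt 2 * Real.sqrt 3 = Real.sqrt 6 := by
    rw [← Real.sqrt_mul (by norm_num)]; norm_num
  have p2 : (0:ℝ) < Real.sqrt 2 := Real.sqrt_pos.mpr (by norm_num)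
  have p3 : (0:ℝ) < Real.sqrt 3 := Real.sqrt_pos.mpr (by norm_num)
  have p6 : (0:ℝ) < Real.sqrt 6 := Real.sqrt_pos.mpr (by norm_num)
  have c2 : ((Real.sqrt 2 : ℝ) : ℂ) ≠ 0 := by exact_mod_cast p2.ne'
  have c3 : ((Real.sqrt 3 : ℝ) : ℂ) ≠ 0 := by exact_mod_cast p3.ne'
  have c6 : ((Real.sqrt 6 : ℝ) : ℂ) ≠ 0 := by exact_mod_cast p6.ne'
  have hc2 : ((Real.sqrt 2 : ℝ) : ℂ) ^ 2 = 2 := by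
    rw [sq, ← Complex.ofReal_mul, Real.mul_self_sqrt (by norm_num)]; norm_num
  have hc23 : ((Real.sqrt 2 : ℝ) : ℂ) * ((Real.sqrt 3 : ℝ) : ℂ) = ((Real.sqrt 6 : ℝ) : ℂ) := by
    exact_mod_cast congrArg Complex.ofReal h23
  subst hP hv
  have norm1 : (∑ i, Complex.normSq
      ((![1 / (Real.sqrt 6 : ℂ), Complex.I / (Real.sqrt 3 : ℂ),
        -(1 / (Real.sqrt 2 : ℂ))] : Fin 3 → ℂ) i)) = 1 := by
    simp [Fin.sum_univ_three, Complex.normSq_div, Complex.normSq_I, Complex.normSq_neg,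
      Complex.normSq_ofReal]
    norm_num
  have hq : ((1:ℂ) / (Real.sqrt 6 : ℂ)) ^ 2 + (Complex.I / (Real.sqrt 3 : ℂ)) ^ 2 -
      (1 / (Real.sqrt 3 : ℂ)) *
        ((1 / (Real.sqrt 6 : ℂ)) * (-(1 / (Real.sqrt 2 : ℂ)))) = 0 := by
    rw [← hc23, div_pow Complex.I, Complex.I_sq]
    field_simp
    linear_combination -hc2
  have hsum : (∑ i, ∑ j, star ((![1 / (Real.sqrt 6 : ℂ), Complex.I / (Real.sqrt 3 : ℂ),
        -(1 / (Real.sqrt 2 : ℂ))] : Fin 3 → ℂ) i) *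
      (!![0, 0, 1/2; 0, 0, 0; 1/2, 0, 0] : Matrix (Fin 3) (Fin 3) ℂ) i j *
      ((![1 / (Real.sqrt 6 : ℂ), Complex.I / (Real.sqrt 3 : ℂ),
        -(1 / (Real.sqrt 2 : ℂ))] : Fin 3 → ℂ) j)) = -(1 / (2 * (Real.sqrt 3 : ℂ))) := by
    simp only [Fin.sum_univ_three, Matrix.cons_val', Matrix.cons_val_zero, Matrix.cons_val_one,
      Matrix.head_cons, Matrix.cons_val_two, Matrix.tail_cons, Matrix.empty_val',
      Matrix.cons_val_fin_one, Matrix.head_fin_const, Matrix.of_apply, Complex.star_def,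
      map_div₀, map_neg, map_one, Complex.conj_ofReal, Complex.conj_I,
      mul_zero, zero_mul, add_zero, zero_add]
    rw [← hc23]
    have hinv : ((Real.sqrt 2:ℝ):ℂ)⁻¹ ^ 2 = 2⁻¹ := by rw [inv_pow, hc2]
    ring_nf
    rw [hinv]
    ring
  refine ⟨norm1, hq, hsum, ⟨_, norm1, hq, ?_⟩, ?_⟩
  · rw [hsum]
    have : -(1 / (2 * ((Real.sqrt 3 : ℝ) : ℂ))) = (((-(1 / (2 * Real.sqrt 3)) : ℝ)) : ℂ) := by
      push_cast; ring
    rw [this, Complex.ofReal_re]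
  · rw [neg_lt, neg_zero]
    positivity
end

section
/- Let n ≥ 1, d ≥ 1 and let Π_d be the orthogonal projection of (ℝⁿ)^{⊗d} onto the symmetric subspace. Define N = M(‖x‖^{2d}) to be the unique symmetric operator on S^d(ℝⁿ) satisfying ⟨x^{⊗d}, N x^{⊗d}⟩ = ‖x‖^{2d} for all x and invariant under partial transpose in the first factor. Then N is positive definite. -/
open MeasureTheory Real Finset

noncomputable section SG19

/-! ### One-dimensional Gaussian moments -/

lemma sgInt (k : ℕ) : Integrable (fun x : ℝ => x ^ k * Real.exp (-x ^ 2)) := by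
  have h := integrable_rpow_mul_exp_neg_mul_sq (b := 1) one_pos
    (s := (k : ℝ)) (by exact_mod_cast neg_one_lt_zero.trans_le (Nat.cast_nonneg k))
  simpa [Real.rpow_natCast] using h

/-- the k-th Gaussian moment -/
def sgm (k : ℕ) : ℝ := ∫ x : ℝ, x ^ k * Real.exp (-x ^ 2)

lemma sgm0_pos : 0 < sgm 0 := by
  have : sgm 0 = Real.sqrt (π / 1) := by
    rw [sgm, ← integral_gaussian 1]
    simp
  rw [this]
  positivity

lemma sgm_odd {k : ℕ} (hk : Odd k) : sgm k = 0 := by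
  have h1 : sgm k = ∫ x : ℝ, (-x) ^ k * Real.exp (-(-x) ^ 2) := by
    rw [sgm, ← integral_neg_eq_self]
  have h2 : (fun x : ℝ => (-x) ^ k * Real.exp (-(-x) ^ 2))
      = fun x : ℝ => -(x ^ k * Real.exp (-x ^ 2)) := by
    funext x; rw [hk.neg_pow]; ring_nf
  rw [h2, integral_neg] at h1
  have h3 : sgm k = -sgm k := h1
  linarith

lemma sgm_rec (k : ℕ) : sgm (k + 2) = ((k : ℝ) + 1) / 2 * sgm k := by
  have hu : ∀ x : ℝ, HasDerivAt (fun y : ℝ => y ^ (k + 1)) (((k : ℝ) + 1) * x ^ k) x := by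
    intro x
    simpa using hasDerivAt_pow (k + 1) x
  have hv : ∀ x : ℝ, HasDerivAt (fun y : ℝ => Real.exp (-y ^ 2))
      (Real.exp (-x ^ 2) * (-(2 * x))) x := by
    intro x
    have h1 : HasDerivAt (fun y : ℝ => -y ^ 2) (-(2 * x)) x := by
      exact (hasDerivAt_pow 2 x).neg.congr_deriv (by norm_num)
    exact h1.exp
  have huv' : Integrable ((fun y : ℝ => y ^ (k + 1)) *
      fun x : ℝ => Real.exp (-x ^ 2) * (-(2 * x))) := by
    have : ((fun y : ℝ => y ^ (k + 1)) * fun x : ℝ => Real.exp (-x ^ 2) * (-(2 * x)))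
        = fun x : ℝ => (-2) * (x ^ (k + 2) * Real.exp (-x ^ 2)) := by
      funext x; simp [Pi.mul_apply]; ring
    rw [this]
    exact (sgInt (k + 2)).const_mul _
  have hu'v : Integrable ((fun x : ℝ => ((k : ℝ) + 1) * x ^ k) *
      fun y : ℝ => Real.exp (-y ^ 2)) := by
    have : ((fun x : ℝ => ((k : ℝ) + 1) * x ^ k) * fun y : ℝ => Real.exp (-y ^ 2))
        = fun x : ℝ => ((k : ℝ) + 1) * (x ^ k * Real.exp (-x ^ 2)) := by
      funext x; simp [Pi.mul_apply]; ring
    rw [this]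
    exact (sgInt k).const_mul _
  have huv : Integrable ((fun y : ℝ => y ^ (k + 1)) * fun y : ℝ => Real.exp (-y ^ 2)) := by
    have : ((fun y : ℝ => y ^ (k + 1)) * fun y : ℝ => Real.exp (-y ^ 2))
        = fun x : ℝ => x ^ (k + 1) * Real.exp (-x ^ 2) := rfl
    rw [this]; exact sgInt (k + 1)
  have key := integral_mul_deriv_eq_deriv_mul_of_integrable (fun x _ => hu x) (fun x _ => hv x) huv' hu'v huv
  have h1 : ∫ x : ℝ, x ^ (k + 1) * (Real.exp (-x ^ 2) * (-(2 * x)))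
      = (-2) * sgm (k + 2) := by
    rw [sgm, ← integral_const_mul]
    congr 1; funext x; ring
  have h2 : ∫ x : ℝ, ((k : ℝ) + 1) * x ^ k * Real.exp (-x ^ 2)
      = ((k : ℝ) + 1) * sgm k := by
    rw [sgm, ← integral_const_mul]
    congr 1; funext x; ring
  rw [h1, h2] at key
  linarith

/-! ### Normalized moments and the binomial identity -/

noncomputable def sgE (k : ℕ) : ℝ := sgm k / sgm 0

lemma sgE_zero : sgE 0 = 1 := div_self sgm0_pos.ne'

lemma sgE_odd {k : ℕ} (hk : Odd k) : sgE k = 0 := by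
  rw [sgE, sgm_odd hk, zero_div]

lemma sgE_rec (k : ℕ) : sgE (k + 2) = ((k : ℝ) + 1) / 2 * sgE k := by
  rw [sgE, sgE, sgm_rec, mul_div_assoc]

lemma sgE_even (j : ℕ) :
    sgE (2 * j) * (4 ^ j * (j.factorial : ℝ)) = ((2 * j).factorial : ℝ) := by
  induction j with
  | zero => simp [sgE_zero]
  | succ j ih =>
    have h1 : 2 * (j + 1) = 2 * j + 2 := by ring
    rw [h1, sgE_rec]
    have h2 : ((2 * (j + 1)).factorial : ℝ)
        = (2 * j + 2) * ((2 * j + 1) * ((2 * j).factorial : ℝ)) := by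
      have : (2 * (j + 1)) = (2 * j + 1) + 1 := by ring
      rw [this, Nat.factorial_succ, Nat.factorial_succ]
      push_cast; ring
    rw [h1] at h2
    rw [h2, ← ih]
    have h3 : ((j + 1).factorial : ℝ) = (j + 1) * (j.factorial : ℝ) := by
      rw [Nat.factorial_succ]; push_cast; ring
    rw [h3]
    push_cast
    ring

lemma sgE_eq (i : ℕ) : sgE (2 * i) = ((2 * i).factorial : ℝ) / (4 ^ i * i.factorial) := by
  rw [eq_div_iff (by positivity)]
  exact sgE_even i

lemma sgE_even_pos (j : ℕ) : 0 < sgE (2 * j) := by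
  rw [sgE_eq]
  positivity

lemma sgT {D j : ℕ} (hj : j ≤ D) :
    ((2 * D).choose (2 * j) : ℝ) * sgE (2 * j) * sgE (2 * (D - j))
      = sgE (2 * D) * (D.choose j : ℝ) := by
  have key1 : (2 * D).choose (2 * j) * (2 * j).factorial * (2 * (D - j)).factorial
      = (2 * D).factorial := by
    have h := Nat.choose_mul_factorial_mul_factorial (show 2 * j ≤ 2 * D by omega)
    have hsub : 2 * D - 2 * j = 2 * (D - j) := by omega
    rwa [hsub] at h
  have key2 : D.choose j * j.factorial * (D - j).factorial = D.factorial :=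
    Nat.choose_mul_factorial_mul_factorial hj
  have hc1 : ((2 * D).choose (2 * j) : ℝ) * ((2 * j).factorial : ℝ)
      * ((2 * (D - j)).factorial : ℝ) = ((2 * D).factorial : ℝ) := by exact_mod_cast key1
  have hc2 : (D.choose j : ℝ) * (j.factorial : ℝ) * ((D - j).factorial : ℝ)
      = (D.factorial : ℝ) := by exact_mod_cast key2
  have hpow : (4:ℝ) ^ j * 4 ^ (D - j) = 4 ^ D := by
    rw [← pow_add]; congr 1; omega
  rw [sgE_eq, sgE_eq, sgE_eq]
  have h1 : (j.factorial : ℝ) ≠ 0 := by positivity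
  have h2 : ((D - j).factorial : ℝ) ≠ 0 := by positivity
  have h3 : (D.factorial : ℝ) ≠ 0 := by positivity
  field_simp
  rw [← hpow]
  linear_combination ((4:ℝ) ^ j * 4 ^ (D - j) * (D.factorial : ℝ)) * hc1
    - ((2 * D).factorial : ℝ) * ((4:ℝ) ^ j * 4 ^ (D - j)) * hc2

lemma sgBIN (m : ℕ) (u v : ℝ) :
    ∑ k ∈ range (m + 1), (m.choose k : ℝ) * sgE k * sgE (m - k) * u ^ k * v ^ (m - k)
      = sgE m * Real.sqrt (u ^ 2 + v ^ 2) ^ m := by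
  rcases Nat.even_or_odd m with hm | hm
  · obtain ⟨D, hD⟩ := hm
    have hm2 : m = 2 * D := by omega
    subst hm2
    have hsq : Real.sqrt (u ^ 2 + v ^ 2) ^ (2 * D) = (u ^ 2 + v ^ 2) ^ D := by
      rw [pow_mul, Real.sq_sqrt (by positivity)]
    rw [hsq, add_pow]
    rw [Finset.mul_sum]
    have hsplit : ∑ k ∈ range (2 * D + 1),
        ((2 * D).choose k : ℝ) * sgE k * sgE (2 * D - k) * u ^ k * v ^ (2 * D - k)
        = ∑ j ∈ range (D + 1),
        ((2 * D).choose (2 * j) : ℝ) * sgE (2 * j) * sgE (2 * D - 2 * j) * u ^ (2 * j)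
          * v ^ (2 * D - 2 * j) := by
      rw [← Finset.sum_filter_add_sum_filter_not (range (2 * D + 1)) (fun k => Even k)]
      have hodd : ∑ k ∈ (range (2 * D + 1)).filter (fun k => ¬ Even k),
          ((2 * D).choose k : ℝ) * sgE k * sgE (2 * D - k) * u ^ k * v ^ (2 * D - k) = 0 := by
        apply Finset.sum_eq_zero
        intro k hk
        simp only [Finset.mem_filter] at hk
        have : Odd k := Nat.odd_iff.mpr (by
          have := hk.2; rw [Nat.even_iff] at this; omega)
        rw [sgE_odd this]; ring
      rw [hodd, add_zero]
      apply Finset.sum_nbij' (i := fun k => k / 2) (j := fun j => 2 * j)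
      · intro k hk; simp only [Finset.mem_filter, Finset.mem_range] at hk ⊢
        rw [Nat.even_iff] at hk; omega
      · intro j hj; simp only [Finset.mem_filter, Finset.mem_range] at hj ⊢
        constructor; · omega
        · exact even_two_mul j
      · intro k hk; simp only [Finset.mem_filter, Finset.mem_range] at hk
        rw [Nat.even_iff] at hk; omega
      · intro j hj; omega
      · intro k hk
        simp only [Finset.mem_filter, Finset.mem_range] at hk
        rw [Nat.even_iff] at hk
        have : 2 * (k / 2) = k := by omega
        rw [this]
    rw [hsplit]
    apply Finset.sum_congr rfl
    intro j hj
    simp only [Finset.mem_range] at hj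
    have hjD : j ≤ D := by omega
    have hsub : 2 * D - 2 * j = 2 * (D - j) := by omega
    rw [hsub, sgT hjD, ← pow_mul, ← pow_mul]
    ring
  · rw [sgE_odd hm]
    rw [zero_mul]
    apply Finset.sum_eq_zero
    intro k hk
    simp only [Finset.mem_range] at hk
    rcases Nat.even_or_odd k with hke | hko
    · have : Odd (m - k) := by
        rw [Nat.odd_iff] at hm ⊢; rw [Nat.even_iff] at hke; omega
      rw [sgE_odd this]; ring
    · rw [sgE_odd hko]; ring

/-! ### Counting and expansion -/

/-- fiber count of a tuple -/
def sgCnt {n : ℕ} {ι : Type*} [Fintype ι] (c : ι → Fin n) (i : Fin n) : ℕ :=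
  (Finset.univ.filter fun t => c t = i).card

lemma sgFW {n : ℕ} {ι : Type*} [Fintype ι] {M : Type*} [CommMonoid M] (c : ι → Fin n)
    (f : Fin n → M) :
    ∏ t, f (c t) = ∏ i, f i ^ sgCnt c i := by
  classical
  rw [← Finset.prod_fiberwise_of_maps_to (g := c) (t := Finset.univ)
    (fun x _ => Finset.mem_univ _) (fun t => f (c t))]
  apply Finset.prod_congr rfl
  intro i _
  rw [Finset.prod_congr rfl (fun t ht => by
    simp only [Finset.mem_filter] at ht
    rw [ht.2]), Finset.prod_const]
  rfl

lemma sgL {n : ℕ} {ι : Type*} [Fintype ι] [DecidableEq ι] {c c' : ι → Fin n}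
    (h : ∀ i, sgCnt c i = sgCnt c' i) : ∃ σ : Equiv.Perm ι, c' = c ∘ σ := by
  classical
  have hcard : ∀ v : Fin n, Fintype.card {t // c' t = v} = Fintype.card {t // c t = v} := by
    intro v
    rw [Fintype.card_subtype, Fintype.card_subtype]
    exact (h v).symm
  let e : ∀ v : Fin n, {t // c' t = v} ≃ {t // c t = v} :=
    fun v => Fintype.equivOfCardEq (hcard v)
  refine ⟨(Equiv.sigmaFiberEquiv c').symm.trans
    ((Equiv.sigmaCongrRight e).trans (Equiv.sigmaFiberEquiv c)), ?_⟩
  funext t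
  simp only [Function.comp_apply, Equiv.trans_apply, Equiv.sigmaFiberEquiv,
    Equiv.sigmaCongrRight]
  exact ((e (c' t)) ⟨t, rfl⟩).2.symm

lemma sgEXP {n : ℕ} (m : ℕ) (x g : Fin n → ℝ) :
    (∑ i, x i * g i) ^ m
      = ∑ c : Fin m → Fin n, (∏ t, x (c t)) * ∏ i, g i ^ sgCnt c i := by
  classical
  have h1 : (∑ i, x i * g i) ^ m = ∏ _t : Fin m, (∑ i, x i * g i) := by
    rw [Finset.prod_const, Finset.card_univ, Fintype.card_fin]
  rw [h1]
  have h2 := Finset.prod_univ_sum (fun _ : Fin m => (Finset.univ : Finset (Fin n)))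
    (fun _t i => x i * g i)
  rw [h2, Fintype.piFinset_univ]
  apply Finset.sum_congr rfl
  intro c _
  rw [Finset.prod_mul_distrib, sgFW c g]

lemma sgEXP2 {n : ℕ} (m : ℕ) (x g : Fin n → ℝ) :
    (∑ i, x i * g i) ^ m
      = ∑ c : Fin m → Fin n, (∏ t, x (c t)) * ∏ t, g (c t) := by
  rw [sgEXP m x g]
  exact Finset.sum_congr rfl (fun c _ => by rw [sgFW c g])

lemma sgCnt_sum {n d : ℕ} (a b : Fin d → Fin n) (i : Fin n) :
    sgCnt (Sum.elim a b) i = sgCnt a i + sgCnt b i := by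
  classical
  rw [sgCnt, sgCnt, sgCnt, ← Fintype.card_subtype, ← Fintype.card_subtype,
    ← Fintype.card_subtype]
  rw [← Fintype.card_sum]
  exact Fintype.card_congr (Equiv.subtypeSum)

/-! ### Pi-space integrals -/

lemma sgIntMono {n : ℕ} (γ : Fin n → ℕ) :
    Integrable (fun g : Fin n → ℝ => ∏ i, (g i ^ γ i * Real.exp (-(g i) ^ 2))) :=
  Integrable.fin_nat_prod (fun i => sgInt (γ i))

lemma sgMomEval {n : ℕ} (γ : Fin n → ℕ) :
    ∫ g : Fin n → ℝ, ∏ i, (g i ^ γ i * Real.exp (-(g i) ^ 2)) = ∏ i, sgm (γ i) := by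
  rw [volume_pi, MeasureTheory.integral_fin_nat_prod_eq_prod
    (f := fun (i : Fin n) (x : ℝ) => x ^ γ i * Real.exp (-x ^ 2))]
  rfl

lemma sep_eq {n : ℕ} (m : ℕ) (x g : Fin n → ℝ) :
    (∑ i, x i * g i) ^ m * ∏ i, Real.exp (-(g i) ^ 2)
      = ∑ c : Fin m → Fin n,
          (∏ t, x (c t)) * ∏ i, (g i ^ sgCnt c i * Real.exp (-(g i) ^ 2)) := by
  rw [sgEXP m x g, Finset.sum_mul]
  exact Finset.sum_congr rfl (fun c _ => by rw [mul_assoc, ← Finset.prod_mul_distrib])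

lemma sgIntInner {n : ℕ} (m : ℕ) (x : Fin n → ℝ) :
    Integrable (fun g : Fin n → ℝ =>
      (∑ i, x i * g i) ^ m * ∏ i, Real.exp (-(g i) ^ 2)) := by
  have h : (fun g : Fin n → ℝ => (∑ i, x i * g i) ^ m * ∏ i, Real.exp (-(g i) ^ 2))
      = fun g => ∑ c : Fin m → Fin n,
          (∏ t, x (c t)) * ∏ i, (g i ^ sgCnt c i * Real.exp (-(g i) ^ 2)) := by
    funext g; exact sep_eq m x g
  rw [h]
  exact integrable_finset_sum _ (fun c _ => (sgIntMono _).const_mul _)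

lemma sgA : ∀ (n : ℕ) (m : ℕ) (x : Fin n → ℝ),
    ∫ g : Fin n → ℝ, (∑ i, x i * g i) ^ m * ∏ i, Real.exp (-(g i) ^ 2)
      = sgm 0 ^ n * sgE m * Real.sqrt (∑ i, x i ^ 2) ^ m := by
  intro n
  induction n with
  | zero =>
    intro m x
    have h : (fun g : Fin 0 → ℝ => (∑ i, x i * g i) ^ m * ∏ i, Real.exp (-(g i) ^ 2))
        = fun _ => (0 : ℝ) ^ m := by
      funext g; simp
    rw [h]
    rw [integral_const]
    have hvol : ((volume : Measure (Fin 0 → ℝ)) Set.univ).toReal = 1 := by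
      rw [volume_pi, Measure.pi_univ]
      simp
    rw [measureReal_def, hvol]
    have hs : (∑ i : Fin 0, x i ^ 2) = 0 := by simp
    rw [hs, Real.sqrt_zero]
    rcases Nat.eq_zero_or_pos m with hm | hm
    · subst hm; simp [sgE_zero]
    · rw [zero_pow (by omega : m ≠ 0)]
      simp
  | succ n ih =>
    intro m x
    rw [volume_pi, ← ((measurePreserving_piFinSuccAbove
      (fun _ : Fin (n + 1) => (volume : Measure ℝ)) 0).symm).integral_comp']
    have hrw : ∀ p : ℝ × (Fin n → ℝ),
        (fun g : Fin (n + 1) → ℝ => (∑ i, x i * g i) ^ m * ∏ i, Real.exp (-(g i) ^ 2))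
          ((MeasurableEquiv.piFinSuccAbove (fun _ : Fin (n + 1) => ℝ) 0).symm p)
        = ∑ k ∈ range (m + 1),
            ((m.choose k : ℝ) * x 0 ^ k)
              * ((p.1 ^ k * Real.exp (-p.1 ^ 2))
                * ((∑ i : Fin n, x i.succ * p.2 i) ^ (m - k)
                    * ∏ i : Fin n, Real.exp (-(p.2 i) ^ 2))) := by
      intro p
      simp only [MeasurableEquiv.piFinSuccAbove_symm_apply, Fin.insertNthEquiv,
        Equiv.coe_fn_mk, Fin.insertNth_zero, Fin.zero_succAbove, cast_eq]
      rw [Fin.sum_univ_succ, Fin.prod_univ_succ]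
      simp only [Fin.cons_zero, Fin.cons_succ]
      rw [add_pow]
      rw [Finset.sum_mul]
      apply Finset.sum_congr rfl
      intro k hk
      ring
    rw [integral_congr_ae (Filter.Eventually.of_forall hrw)]
    rw [integral_finset_sum]
    · have hterm : ∀ k ∈ range (m + 1),
          ∫ p : ℝ × (Fin n → ℝ),
            ((m.choose k : ℝ) * x 0 ^ k)
              * ((p.1 ^ k * Real.exp (-p.1 ^ 2))
                * ((∑ i : Fin n, x i.succ * p.2 i) ^ (m - k)
                    * ∏ i : Fin n, Real.exp (-(p.2 i) ^ 2)))
            ∂((volume : Measure ℝ).prod (Measure.pi fun _ : Fin n => volume))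
          = ((m.choose k : ℝ) * x 0 ^ k) * (sgm k *
              (sgm 0 ^ n * sgE (m - k) * Real.sqrt (∑ i : Fin n, x i.succ ^ 2) ^ (m - k))) := by
        intro k hk
        rw [integral_const_mul]
        congr 1
        have hpm := MeasureTheory.integral_prod_mul (μ := (volume : Measure ℝ))
          (ν := (Measure.pi fun _ : Fin n => (volume : Measure ℝ)))
          (fun u : ℝ => u ^ k * Real.exp (-u ^ 2))
          (fun y : Fin n → ℝ =>
            (∑ i : Fin n, x i.succ * y i) ^ (m - k) * ∏ i : Fin n, Real.exp (-(y i) ^ 2))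
        rw [hpm]
        rw [← sgm]
        congr 1
        rw [← volume_pi]
        exact ih (m - k) (fun i => x i.succ)
      rw [Finset.sum_congr rfl hterm]
      have hS : (0:ℝ) ≤ ∑ i : Fin n, x i.succ ^ 2 := by positivity
      have hBIN := sgBIN m (x 0) (Real.sqrt (∑ i : Fin n, x i.succ ^ 2))
      rw [Real.sq_sqrt hS] at hBIN
      have hsum : ∑ i : Fin (n + 1), x i ^ 2 = x 0 ^ 2 + ∑ i : Fin n, x i.succ ^ 2 := by
        rw [Fin.sum_univ_succ]
      rw [hsum]
      have hassoc : sgm 0 ^ (n + 1) * sgE m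
            * Real.sqrt (x 0 ^ 2 + ∑ i : Fin n, x i.succ ^ 2) ^ m
          = sgm 0 ^ (n + 1) * (sgE m
            * Real.sqrt (x 0 ^ 2 + ∑ i : Fin n, x i.succ ^ 2) ^ m) := by ring
      rw [hassoc, ← hBIN, Finset.mul_sum]
      apply Finset.sum_congr rfl
      intro k hk
      have hmk : sgm k = sgE k * sgm 0 := by
        rw [sgE, div_mul_cancel₀]; exact sgm0_pos.ne'
      rw [hmk]
      ring
    · intro k hk
      apply Integrable.const_mul
      have h2 : Integrable (fun y : Fin n → ℝ =>
          (∑ i : Fin n, x i.succ * y i) ^ (m - k) * ∏ i : Fin n, Real.exp (-(y i) ^ 2))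
          (Measure.pi fun _ : Fin n => volume) := by
        rw [← volume_pi]
        exact sgIntInner (m - k) (fun i => x i.succ)
      exact Integrable.mul_prod (sgInt k) h2

/-! ### MvPolynomial helpers -/

lemma sgProdX {n : ℕ} {ι : Type*} [Fintype ι] [DecidableEq ι] (c : ι → Fin n) :
    (∏ t, (MvPolynomial.X (c t) : MvPolynomial (Fin n) ℝ))
      = MvPolynomial.monomial (∑ t, Finsupp.single (c t) 1) 1 := by
  have key : ∀ s : Finset ι, (∏ t ∈ s, (MvPolynomial.X (c t) : MvPolynomial (Fin n) ℝ))
      = MvPolynomial.monomial (∑ t ∈ s, Finsupp.single (c t) 1) 1 := by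
    intro s
    induction s using Finset.induction with
    | empty => simp
    | @insert a s ha ih =>
      rw [Finset.prod_insert ha, Finset.sum_insert ha, ih]
      rw [MvPolynomial.X, MvPolynomial.monomial_mul, one_mul]
  exact key Finset.univ

/-- exponent record of a tuple -/
def sgGF {n : ℕ} {ι : Type*} [Fintype ι] (c : ι → Fin n) : Fin n →₀ ℕ :=
  ∑ t, Finsupp.single (c t) 1

lemma sgGF_apply {n : ℕ} {ι : Type*} [Fintype ι] (c : ι → Fin n) (i : Fin n) :
    sgGF c i = sgCnt c i := by
  classical
  rw [sgGF, Finset.sum_apply']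
  rw [sgCnt, Finset.card_filter]
  apply Finset.sum_congr rfl
  intro t _
  rw [Finsupp.single_apply]

end SG19

noncomputable section SGMain

set_option maxHeartbeats 1000000 in
/-- The maximally symmetric Gram operator `N = M(‖x‖^{2d})` of the form `‖x‖^{2d}`
(a symmetric operator on `S^d(ℝⁿ)`, i.e. a symmetric matrix on the `d`-fold tensor
power which is invariant under permutations of the tensor factors, is a Gram operator
for `‖x‖^{2d}`, and is invariant under partial transpose in the first factor) is
positive definite on the symmetric subspace. -/
theorem stmt_19 (n d : ℕ) (hn : 1 ≤ n) (hd : 1 ≤ d)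
    (N : Matrix (Fin d → Fin n) (Fin d → Fin n) ℝ)
    (hsym : ∀ a b, N a b = N b a)
    (hperm : ∀ (σ : Equiv.Perm (Fin d)) (a b : Fin d → Fin n),
      N (a ∘ σ) b = N a b ∧ N a (b ∘ σ) = N a b)
    (hGram : ∀ x : Fin n → ℝ,
      ∑ a, ∑ b, (∏ t, x (a t)) * N a b * (∏ t, x (b t)) = (∑ i, (x i) ^ 2) ^ d)
    (hpt : ∀ a b : Fin d → Fin n,
      N (Function.update a ⟨0, by omega⟩ (b ⟨0, by omega⟩))
        (Function.update b ⟨0, by omega⟩ (a ⟨0, by omega⟩)) = N a b) :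
    ∀ ψ : (Fin d → Fin n) → ℝ,
      (∀ (σ : Equiv.Perm (Fin d)) (a : Fin d → Fin n), ψ (a ∘ σ) = ψ a) →
      ψ ≠ 0 → 0 < ∑ a, ∑ b, ψ a * N a b * ψ b := by
  intro ψ hψ hψ0
  classical
  set z : Fin d := ⟨0, by omega⟩ with hz
  -- the reference Gram matrix, built from Gaussian integrals
  set M : (Fin d → Fin n) → (Fin d → Fin n) → ℝ := fun a b =>
    ∫ g : Fin n → ℝ, ((∏ t, g (a t)) * ∏ t, g (b t)) * ∏ i, Real.exp (-(g i) ^ 2)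
    with hMdef
  -- rearrangement of the integrand
  have hre : ∀ (a b : Fin d → Fin n) (g : Fin n → ℝ),
      ((∏ t, g (a t)) * ∏ t, g (b t)) * ∏ i, Real.exp (-(g i) ^ 2)
        = ∏ i, (g i ^ (sgCnt a i + sgCnt b i) * Real.exp (-(g i) ^ 2)) := by
    intro a b g
    rw [sgFW a g, sgFW b g, ← Finset.prod_mul_distrib, ← Finset.prod_mul_distrib]
    exact Finset.prod_congr rfl (fun i _ => by rw [pow_add])
  have hMapp : ∀ a b : Fin d → Fin n, M a b
      = ∫ g : Fin n → ℝ, ((∏ t, g (a t)) * ∏ t, g (b t)) * ∏ i, Real.exp (-(g i) ^ 2) :=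
    fun a b => rfl
  have hMval : ∀ a b, M a b = ∏ i, sgm (sgCnt a i + sgCnt b i) := by
    intro a b
    rw [hMapp]
    rw [integral_congr_ae (Filter.Eventually.of_forall (hre a b)), sgMomEval]
  have hMint : ∀ a b : Fin d → Fin n, Integrable (fun g : Fin n → ℝ =>
      ((∏ t, g (a t)) * ∏ t, g (b t)) * ∏ i, Real.exp (-(g i) ^ 2)) := by
    intro a b
    have : (fun g : Fin n → ℝ =>
        ((∏ t, g (a t)) * ∏ t, g (b t)) * ∏ i, Real.exp (-(g i) ^ 2))
        = fun g => ∏ i, (g i ^ (sgCnt a i + sgCnt b i) * Real.exp (-(g i) ^ 2)) := by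
      funext g; exact hre a b g
    rw [this]
    exact sgIntMono _
  -- M is determined by the combined counts
  have hMcnt : ∀ a b a' b' : Fin d → Fin n,
      (∀ i, sgCnt a i + sgCnt b i = sgCnt a' i + sgCnt b' i) → M a b = M a' b' := by
    intro a b a' b' h
    rw [hMval, hMval]
    exact Finset.prod_congr rfl (fun i _ => by rw [h i])
  -- the Gram identity for M
  set c₀ : ℝ := sgm 0 ^ n * sgE (2 * d) with hc₀
  have hc₀pos : 0 < c₀ := mul_pos (pow_pos sgm0_pos n) (sgE_even_pos d)
  have hG : ∀ x : Fin n → ℝ,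
      ∑ a, ∑ b, (∏ t, x (a t)) * (∏ t, x (b t)) * M a b
        = c₀ * (∑ i, x i ^ 2) ^ d := by
    intro x
    have step1 : ∑ a, ∑ b, (∏ t, x (a t)) * (∏ t, x (b t)) * M a b
        = ∫ g : Fin n → ℝ, ∑ a : Fin d → Fin n, ∑ b : Fin d → Fin n,
            ((∏ t, x (a t)) * (∏ t, x (b t)))
            * (((∏ t, g (a t)) * ∏ t, g (b t)) * ∏ i, Real.exp (-(g i) ^ 2)) := by
      rw [integral_finset_sum _ (fun a _ => integrable_finset_sum _
        (fun b _ => (hMint a b).const_mul _))]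
      apply Finset.sum_congr rfl
      intro a _
      rw [integral_finset_sum _ (fun b _ => (hMint a b).const_mul _)]
      apply Finset.sum_congr rfl
      intro b _
      rw [integral_const_mul]
    rw [step1]
    have step2 : ∀ g : Fin n → ℝ,
        ∑ a : Fin d → Fin n, ∑ b : Fin d → Fin n, ((∏ t, x (a t)) * (∏ t, x (b t)))
            * (((∏ t, g (a t)) * ∏ t, g (b t)) * ∏ i, Real.exp (-(g i) ^ 2))
        = (∑ i, x i * g i) ^ (2 * d) * ∏ i, Real.exp (-(g i) ^ 2) := by
      intro g
      have hxg : (∑ i, x i * g i) ^ (2 * d)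
          = (∑ a : Fin d → Fin n, (∏ t, x (a t)) * ∏ t, g (a t))
            * (∑ b : Fin d → Fin n, (∏ t, x (b t)) * ∏ t, g (b t)) := by
        rw [two_mul, pow_add, sgEXP2 d x g]
      rw [hxg, Finset.sum_mul_sum]
      rw [Finset.sum_mul]
      apply Finset.sum_congr rfl
      intro a _
      rw [Finset.sum_mul]
      apply Finset.sum_congr rfl
      intro b _
      ring
    rw [integral_congr_ae (Filter.Eventually.of_forall step2)]
    rw [sgA n (2 * d) x]
    have : Real.sqrt (∑ i, x i ^ 2) ^ (2 * d) = (∑ i, x i ^ 2) ^ d := by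
      rw [pow_mul, Real.sq_sqrt (by positivity)]
    rw [this, hc₀]
  -- ### Symmetry of N under arbitrary permutations of the 2d slots
  -- cross swap
  have hCL : ∀ (i j : Fin d) (a b : Fin d → Fin n),
      N (Function.update a i (b j)) (Function.update b j (a i)) = N a b := by
    intro i j a b
    have h1 : N (a ∘ (Equiv.swap z i)) (b ∘ (Equiv.swap z j)) = N a b := by
      rw [(hperm (Equiv.swap z j) (a ∘ (Equiv.swap z i)) b).2,
        (hperm (Equiv.swap z i) a b).1]
    have h2 := hpt (a ∘ (Equiv.swap z i)) (b ∘ (Equiv.swap z j))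
    have ha0 : (a ∘ (Equiv.swap z i)) z = a i := by
      simp [Function.comp_apply, Equiv.swap_apply_left]
    have hb0 : (b ∘ (Equiv.swap z j)) z = b j := by
      simp [Function.comp_apply, Equiv.swap_apply_left]
    have hupa : Function.update (a ∘ (Equiv.swap z i)) z (b j)
        = (Function.update a i (b j)) ∘ (Equiv.swap z i) := by
      rw [Function.update_comp_equiv]
      congr 1
      simp
    have hupb : Function.update (b ∘ (Equiv.swap z j)) z (a i)
        = (Function.update b j (a i)) ∘ (Equiv.swap z j) := by
      rw [Function.update_comp_equiv]
      congr 1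
      simp
    rw [ha0, hb0, hupa, hupb] at h2
    rw [(hperm (Equiv.swap z j) _ _).2, (hperm (Equiv.swap z i) _ _).1] at h2
    rw [h2, h1]
  -- N as a function of a 2d-tuple
    -- NN c := N (c ∘ inl) (c ∘ inr)
  have hswap_ll : ∀ (i j t : Fin d),
      Equiv.swap (Sum.inl i : Fin d ⊕ Fin d) (Sum.inl j) (Sum.inl t)
        = Sum.inl (Equiv.swap i j t) := by
    intro i j t
    by_cases h1 : t = i
    · subst h1; rw [Equiv.swap_apply_left, Equiv.swap_apply_left]
    · by_cases h2 : t = j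
      · subst h2; rw [Equiv.swap_apply_right, Equiv.swap_apply_right]
      · rw [Equiv.swap_apply_of_ne_of_ne (fun h => h1 (Sum.inl.inj h))
          (fun h => h2 (Sum.inl.inj h)),
          Equiv.swap_apply_of_ne_of_ne h1 h2]
  have hswap_rr : ∀ (i j t : Fin d),
      Equiv.swap (Sum.inr i : Fin d ⊕ Fin d) (Sum.inr j) (Sum.inr t)
        = Sum.inr (Equiv.swap i j t) := by
    intro i j t
    by_cases h1 : t = i
    · subst h1; rw [Equiv.swap_apply_left, Equiv.swap_apply_left]
    · by_cases h2 : t = j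
      · subst h2; rw [Equiv.swap_apply_right, Equiv.swap_apply_right]
      · rw [Equiv.swap_apply_of_ne_of_ne (fun h => h1 (Sum.inr.inj h))
          (fun h => h2 (Sum.inr.inj h)),
          Equiv.swap_apply_of_ne_of_ne h1 h2]
  have hSW : ∀ (x y : Fin d ⊕ Fin d) (c : Fin d ⊕ Fin d → Fin n),
      N (fun t => (c ∘ (Equiv.swap x y)) (Sum.inl t)) (fun t => (c ∘ (Equiv.swap x y)) (Sum.inr t))
        = N (fun t => c (Sum.inl t)) (fun t => c (Sum.inr t)) := by
    have main : ∀ (i : Fin d) (y : Fin d ⊕ Fin d) (c : Fin d ⊕ Fin d → Fin n),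
        N (fun t => (c ∘ (Equiv.swap (Sum.inl i) y)) (Sum.inl t))
          (fun t => (c ∘ (Equiv.swap (Sum.inl i) y)) (Sum.inr t))
        = N (fun t => c (Sum.inl t)) (fun t => c (Sum.inr t)) := by
      intro i y c
      rcases y with j | j
      · -- inl inl
        have e1 : (fun t => (c ∘ (Equiv.swap (Sum.inl i : Fin d ⊕ Fin d) (Sum.inl j))) (Sum.inl t))
            = (fun t => c (Sum.inl t)) ∘ (Equiv.swap i j) := by
          funext t
          simp only [Function.comp_apply, hswap_ll]
        have e2 : (fun t => (c ∘ (Equiv.swap (Sum.inl i : Fin d ⊕ Fin d) (Sum.inl j))) (Sum.inr t))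
            = (fun t => c (Sum.inr t)) := by
          funext t
          simp only [Function.comp_apply]
          rw [Equiv.swap_apply_of_ne_of_ne (by simp) (by simp)]
        rw [e1, e2, (hperm (Equiv.swap i j) _ _).1]
      · -- inl inr : cross
        have e1 : (fun t => (c ∘ (Equiv.swap (Sum.inl i : Fin d ⊕ Fin d) (Sum.inr j))) (Sum.inl t))
            = Function.update (fun t => c (Sum.inl t)) i (c (Sum.inr j)) := by
          funext t
          simp only [Function.comp_apply]
          by_cases h : t = i
          · subst h; rw [Equiv.swap_apply_left, Function.update_self]
          · rw [Equiv.swap_apply_of_ne_of_ne (fun hh => h (Sum.inl.inj hh)) (by simp),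
              Function.update_of_ne h]
        have e2 : (fun t => (c ∘ (Equiv.swap (Sum.inl i : Fin d ⊕ Fin d) (Sum.inr j))) (Sum.inr t))
            = Function.update (fun t => c (Sum.inr t)) j (c (Sum.inl i)) := by
          funext t
          simp only [Function.comp_apply]
          by_cases h : t = j
          · subst h; rw [Equiv.swap_apply_right, Function.update_self]
          · rw [Equiv.swap_apply_of_ne_of_ne (by simp) (fun hh => h (Sum.inr.inj hh)),
              Function.update_of_ne h]
        rw [e1, e2]
        exact hCL i j (fun t => c (Sum.inl t)) (fun t => c (Sum.inr t))
    intro x y c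
    rcases x with i | i
    · exact main i y c
    · rcases y with j | j
      · rw [Equiv.swap_comm]
        exact main j (Sum.inr i) c
      · -- inr inr
        have e1 : (fun t => (c ∘ (Equiv.swap (Sum.inr i : Fin d ⊕ Fin d) (Sum.inr j))) (Sum.inl t))
            = (fun t => c (Sum.inl t)) := by
          funext t
          simp only [Function.comp_apply]
          rw [Equiv.swap_apply_of_ne_of_ne (by simp) (by simp)]
        have e2 : (fun t => (c ∘ (Equiv.swap (Sum.inr i : Fin d ⊕ Fin d) (Sum.inr j))) (Sum.inr t))
            = (fun t => c (Sum.inr t)) ∘ (Equiv.swap i j) := by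
          funext t
          simp only [Function.comp_apply, hswap_rr]
        rw [e1, e2, (hperm (Equiv.swap i j) _ _).2]
  have hNNinv : ∀ (σ : Equiv.Perm (Fin d ⊕ Fin d)) (c : Fin d ⊕ Fin d → Fin n),
      N (fun t => (c ∘ σ) (Sum.inl t)) (fun t => (c ∘ σ) (Sum.inr t))
        = N (fun t => c (Sum.inl t)) (fun t => c (Sum.inr t)) := by
    intro σ
    refine Equiv.Perm.swap_induction_on σ ?_ ?_
    · intro c; simp
    · intro f x y hxy ih c
      have hcomp : c ∘ ⇑(Equiv.swap x y * f) = (c ∘ (Equiv.swap x y)) ∘ f := by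
        funext t
        simp [Equiv.Perm.mul_apply]
      rw [hcomp, ih (c ∘ (Equiv.swap x y)), hSW]
  -- N depends only on combined counts
  have hNcnt : ∀ a b a' b' : Fin d → Fin n,
      (∀ i, sgCnt a i + sgCnt b i = sgCnt a' i + sgCnt b' i) → N a b = N a' b' := by
    intro a b a' b' h
    have hc : ∀ i, sgCnt (Sum.elim a b) i = sgCnt (Sum.elim a' b') i := by
      intro i
      rw [sgCnt_sum, sgCnt_sum, h i]
    obtain ⟨σ, hσ⟩ := sgL hc
    have h1 : N a' b' = N (fun t => ((Sum.elim a b) ∘ σ) (Sum.inl t))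
        (fun t => ((Sum.elim a b) ∘ σ) (Sum.inr t)) := by
      rw [← hσ]
      rfl
    rw [h1, hNNinv σ (Sum.elim a b)]
    rfl
  -- ### uniqueness : c₀ * N = M
  have hNM : ∀ a₀ b₀ : Fin d → Fin n, c₀ * N a₀ b₀ = M a₀ b₀ := by
    intro a₀ b₀
    set P : MvPolynomial (Fin n) ℝ :=
      ∑ a : Fin d → Fin n, ∑ b : Fin d → Fin n,
        MvPolynomial.C (c₀ * N a b - M a b)
          * ((∏ t, MvPolynomial.X (a t)) * ∏ t, MvPolynomial.X (b t)) with hP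
    have hPzero : P = 0 := by
      apply MvPolynomial.funext
      intro x
      rw [hP]
      simp only [map_sum, map_mul, MvPolynomial.eval_C, MvPolynomial.eval_prod,
        MvPolynomial.eval_X, map_zero]
      have : ∑ a : Fin d → Fin n, ∑ b : Fin d → Fin n,
          (c₀ * N a b - M a b) * ((∏ t, x (a t)) * ∏ t, x (b t))
          = c₀ * (∑ a, ∑ b, (∏ t, x (a t)) * N a b * (∏ t, x (b t)))
            - ∑ a, ∑ b, (∏ t, x (a t)) * (∏ t, x (b t)) * M a b := by
        rw [Finset.mul_sum, ← Finset.sum_sub_distrib]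
        apply Finset.sum_congr rfl
        intro a _
        rw [Finset.mul_sum, ← Finset.sum_sub_distrib]
        apply Finset.sum_congr rfl
        intro b _
        ring
      rw [this, hGram x, hG x]
      ring
    have hcoeff : MvPolynomial.coeff (sgGF a₀ + sgGF b₀) P
        = ∑ a : Fin d → Fin n, ∑ b : Fin d → Fin n,
            (if sgGF a + sgGF b = sgGF a₀ + sgGF b₀ then c₀ * N a b - M a b else 0) := by
      rw [hP]
      rw [MvPolynomial.coeff_sum]
      apply Finset.sum_congr rfl
      intro a _
      rw [MvPolynomial.coeff_sum]
      apply Finset.sum_congr rfl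
      intro b _
      rw [sgProdX a, sgProdX b, MvPolynomial.monomial_mul, mul_one,
        MvPolynomial.C_mul_monomial, mul_one, MvPolynomial.coeff_monomial]
      rfl
    have hval : ∀ a b : Fin d → Fin n, sgGF a + sgGF b = sgGF a₀ + sgGF b₀
        → c₀ * N a b - M a b = c₀ * N a₀ b₀ - M a₀ b₀ := by
      intro a b hab
      have hcnts : ∀ i, sgCnt a i + sgCnt b i = sgCnt a₀ i + sgCnt b₀ i := by
        intro i
        have := congrFun (congrArg (fun f : Fin n →₀ ℕ => (f : Fin n → ℕ)) hab) i
        simpa [Finsupp.add_apply, sgGF_apply] using this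
      rw [hNcnt a b a₀ b₀ hcnts, hMcnt a b a₀ b₀ hcnts]
    have hc2 : ∑ a : Fin d → Fin n, ∑ b : Fin d → Fin n,
        (if sgGF a + sgGF b = sgGF a₀ + sgGF b₀ then c₀ * N a b - M a b else 0)
        = ∑ a : Fin d → Fin n, ∑ b : Fin d → Fin n,
        (if sgGF a + sgGF b = sgGF a₀ + sgGF b₀ then c₀ * N a₀ b₀ - M a₀ b₀ else 0) := by
      apply Finset.sum_congr rfl
      intro a _
      apply Finset.sum_congr rfl
      intro b _
      by_cases h : sgGF a + sgGF b = sgGF a₀ + sgGF b₀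
      · rw [if_pos h, if_pos h, hval a b h]
      · rw [if_neg h, if_neg h]
    have hzero : (0:ℝ) = ∑ a : Fin d → Fin n, ∑ b : Fin d → Fin n,
        (if sgGF a + sgGF b = sgGF a₀ + sgGF b₀ then c₀ * N a₀ b₀ - M a₀ b₀ else 0) := by
      rw [← hc2, ← hcoeff, hPzero]
      simp
    have hK : (1:ℝ) ≤ ∑ a : Fin d → Fin n, ∑ b : Fin d → Fin n,
        (if sgGF a + sgGF b = sgGF a₀ + sgGF b₀ then (1:ℝ) else 0) := by
      have h1 : (1:ℝ) = (if sgGF a₀ + sgGF b₀ = sgGF a₀ + sgGF b₀ then (1:ℝ) else 0) := by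
        rw [if_pos rfl]
      have h2 : (if sgGF a₀ + sgGF b₀ = sgGF a₀ + sgGF b₀ then (1:ℝ) else 0)
          ≤ ∑ b : Fin d → Fin n,
            (if sgGF a₀ + sgGF b = sgGF a₀ + sgGF b₀ then (1:ℝ) else 0) :=
        Finset.single_le_sum (f := fun b => if sgGF a₀ + sgGF b = sgGF a₀ + sgGF b₀
            then (1:ℝ) else 0)
          (fun b _ => by split <;> norm_num) (Finset.mem_univ b₀)
      have h3 : ∑ b : Fin d → Fin n,
            (if sgGF a₀ + sgGF b = sgGF a₀ + sgGF b₀ then (1:ℝ) else 0)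
          ≤ ∑ a : Fin d → Fin n, ∑ b : Fin d → Fin n,
            (if sgGF a + sgGF b = sgGF a₀ + sgGF b₀ then (1:ℝ) else 0) :=
        Finset.single_le_sum (f := fun a => ∑ b : Fin d → Fin n,
            (if sgGF a + sgGF b = sgGF a₀ + sgGF b₀ then (1:ℝ) else 0))
          (fun a _ => Finset.sum_nonneg (fun b _ => by split <;> norm_num))
          (Finset.mem_univ a₀)
      linarith
    have hsum : ∑ a : Fin d → Fin n, ∑ b : Fin d → Fin n,
        (if sgGF a + sgGF b = sgGF a₀ + sgGF b₀ then c₀ * N a₀ b₀ - M a₀ b₀ else 0)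
        = (c₀ * N a₀ b₀ - M a₀ b₀) * ∑ a : Fin d → Fin n, ∑ b : Fin d → Fin n,
            (if sgGF a + sgGF b = sgGF a₀ + sgGF b₀ then (1:ℝ) else 0) := by
      rw [Finset.mul_sum]
      apply Finset.sum_congr rfl
      intro a _
      rw [Finset.mul_sum]
      apply Finset.sum_congr rfl
      intro b _
      by_cases h : sgGF a + sgGF b = sgGF a₀ + sgGF b₀
      · rw [if_pos h, if_pos h, mul_one]
      · rw [if_neg h, if_neg h, mul_zero]
    rw [hsum] at hzero
    have := hzero.symm
    rcases mul_eq_zero.mp this with h | h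
    · linarith [sub_eq_zero.mp h]
    · linarith
  -- ### positivity of the quadratic form of M
  have hQM : ∑ a, ∑ b, ψ a * M a b * ψ b
      = ∫ g : Fin n → ℝ, (∑ a : Fin d → Fin n, ψ a * ∏ t, g (a t)) ^ 2
          * ∏ i, Real.exp (-(g i) ^ 2) := by
    have step1 : ∑ a, ∑ b, ψ a * M a b * ψ b
        = ∫ g : Fin n → ℝ, ∑ a : Fin d → Fin n, ∑ b : Fin d → Fin n, (ψ a * ψ b)
            * (((∏ t, g (a t)) * ∏ t, g (b t)) * ∏ i, Real.exp (-(g i) ^ 2)) := by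
      rw [integral_finset_sum _ (fun a _ => integrable_finset_sum _
        (fun b _ => (hMint a b).const_mul _))]
      apply Finset.sum_congr rfl
      intro a _
      rw [integral_finset_sum _ (fun b _ => (hMint a b).const_mul _)]
      apply Finset.sum_congr rfl
      intro b _
      rw [integral_const_mul]
      ring
    rw [step1]
    apply integral_congr_ae
    apply Filter.Eventually.of_forall
    intro g
    dsimp only
    rw [sq, Finset.sum_mul_sum]
    rw [Finset.sum_mul]
    apply Finset.sum_congr rfl
    intro a _
    rw [Finset.sum_mul]
    apply Finset.sum_congr rfl
    intro b _
    ring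
  -- nonvanishing of the associated polynomial function
  obtain ⟨a₁, ha₁⟩ := Function.ne_iff.mp hψ0
  have hpne : ∃ g₀ : Fin n → ℝ, (∑ a : Fin d → Fin n, ψ a * ∏ t, g₀ (a t)) ≠ 0 := by
    by_contra hcon
    push_neg at hcon
    set Q : MvPolynomial (Fin n) ℝ :=
      ∑ a : Fin d → Fin n, MvPolynomial.C (ψ a) * ∏ t, MvPolynomial.X (a t) with hQ
    have hQzero : Q = 0 := by
      apply MvPolynomial.funext
      intro x
      rw [hQ]
      simp only [map_sum, map_mul, MvPolynomial.eval_C, MvPolynomial.eval_prod,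
        MvPolynomial.eval_X, map_zero]
      exact hcon x
    have hQcoeff : MvPolynomial.coeff (sgGF a₁) Q
        = ∑ a : Fin d → Fin n, (if sgGF a = sgGF a₁ then ψ a else 0) := by
      rw [hQ, MvPolynomial.coeff_sum]
      apply Finset.sum_congr rfl
      intro a _
      rw [sgProdX a, MvPolynomial.C_mul_monomial, mul_one, MvPolynomial.coeff_monomial]
      rfl
    have hQval : ∑ a : Fin d → Fin n, (if sgGF a = sgGF a₁ then ψ a else 0)
        = ψ a₁ * ∑ a : Fin d → Fin n, (if sgGF a = sgGF a₁ then (1:ℝ) else 0) := by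
      rw [Finset.mul_sum]
      apply Finset.sum_congr rfl
      intro a _
      by_cases h : sgGF a = sgGF a₁
      · rw [if_pos h, if_pos h, mul_one]
        have hcnts : ∀ i, sgCnt a i = sgCnt a₁ i := by
          intro i
          rw [← sgGF_apply, ← sgGF_apply, h]
        obtain ⟨σ, hσ⟩ := sgL (fun i => (hcnts i).symm)
        rw [hσ]
        exact hψ σ a₁
      · rw [if_neg h, if_neg h, mul_zero]
    have hK : (1:ℝ) ≤ ∑ a : Fin d → Fin n, (if sgGF a = sgGF a₁ then (1:ℝ) else 0) := by
      have h1 : (1:ℝ) = (if sgGF a₁ = sgGF a₁ then (1:ℝ) else 0) := by rw [if_pos rfl]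
      exact h1.trans_le (Finset.single_le_sum
        (f := fun a => if sgGF a = sgGF a₁ then (1:ℝ) else 0)
        (fun a _ => by split <;> norm_num) (Finset.mem_univ a₁))
    have : MvPolynomial.coeff (sgGF a₁) Q ≠ 0 := by
      rw [hQcoeff, hQval]
      intro hcontra
      rcases mul_eq_zero.mp hcontra with h | h
      · exact ha₁ h
      · linarith
    rw [hQzero] at this
    simp at this
  obtain ⟨g₀, hg₀⟩ := hpne
  -- the quadratic form of M is positive
  have hFint : Integrable (fun g : Fin n → ℝ =>
      (∑ a : Fin d → Fin n, ψ a * ∏ t, g (a t)) ^ 2 * ∏ i, Real.exp (-(g i) ^ 2)) := by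
    have heq : (fun g : Fin n → ℝ =>
        (∑ a : Fin d → Fin n, ψ a * ∏ t, g (a t)) ^ 2 * ∏ i, Real.exp (-(g i) ^ 2))
        = fun g => ∑ a : Fin d → Fin n, ∑ b : Fin d → Fin n, (ψ a * ψ b)
            * (((∏ t, g (a t)) * ∏ t, g (b t)) * ∏ i, Real.exp (-(g i) ^ 2)) := by
      funext g
      rw [sq, Finset.sum_mul_sum]
      rw [Finset.sum_mul]
      apply Finset.sum_congr rfl
      intro a _
      rw [Finset.sum_mul]
      apply Finset.sum_congr rfl
      intro b _
      ring
    rw [heq]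
    exact integrable_finset_sum _ (fun a _ => integrable_finset_sum _
      (fun b _ => (hMint a b).const_mul _))
  have hppos : 0 < ∫ g : Fin n → ℝ,
      (∑ a : Fin d → Fin n, ψ a * ∏ t, g (a t)) ^ 2 * ∏ i, Real.exp (-(g i) ^ 2) := by
    rw [integral_pos_iff_support_of_nonneg (fun g => by positivity) hFint]
    have hopen : IsOpen {g : Fin n → ℝ | (∑ a : Fin d → Fin n, ψ a * ∏ t, g (a t)) ≠ 0} := by
      have hcont : Continuous (fun g : Fin n → ℝ => ∑ a : Fin d → Fin n, ψ a * ∏ t, g (a t)) := by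
        apply continuous_finset_sum
        intro a _
        apply Continuous.mul continuous_const
        apply continuous_finset_prod
        intro t _
        exact continuous_apply _
      exact isOpen_compl_singleton.preimage hcont
    have hsub : {g : Fin n → ℝ | (∑ a : Fin d → Fin n, ψ a * ∏ t, g (a t)) ≠ 0}
        ⊆ Function.support (fun g : Fin n → ℝ =>
          (∑ a : Fin d → Fin n, ψ a * ∏ t, g (a t)) ^ 2 * ∏ i, Real.exp (-(g i) ^ 2)) := by
      intro g hg
      simp only [Set.mem_setOf_eq] at hg
      simp only [Function.mem_support]
      exact mul_ne_zero (pow_ne_zero 2 hg)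
        (ne_of_gt (Finset.prod_pos (fun i _ => Real.exp_pos _)))
    calc (0 : ENNReal) < volume {g : Fin n → ℝ | (∑ a : Fin d → Fin n, ψ a * ∏ t, g (a t)) ≠ 0} :=
          hopen.measure_pos volume ⟨g₀, hg₀⟩
      _ ≤ _ := measure_mono hsub
  -- ### conclusion
  have hfinal : ∑ a, ∑ b, ψ a * N a b * ψ b
      = (∑ a, ∑ b, ψ a * M a b * ψ b) / c₀ := by
    rw [Finset.sum_div]
    apply Finset.sum_congr rfl
    intro a _
    rw [Finset.sum_div]
    apply Finset.sum_congr rfl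
    intro b _
    rw [← hNM a b]
    field_simp
  rw [hfinal, hQM]
  exact div_pos hppos hc₀pos

end SGMain
end
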